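/- arXiv:1602.03554 — 6 statements merged into one kernel-verified Lean document; each statement's English description precedes it below -/
import Mathlib

section
/- Let A be an associative conformal algebra over a field of characteristic 0. Define new products x_{[n]} y = x_{(n)} y − {y_{(n)} x}, where {y_{(n)} x} = Σ_{k ≥ 0} (−1)^{n+k} (1/k!) D^k (y_{(n+k)} x) (a finite sum by locality). Then the new products satisfy anti-commutativity: x_{[n]} y = −{y_{[n]} x}, where {y_{[n]} x} = Σ_{k ≥ 0} (−1)^{n+k} (1/k!) D^k (y_{[n+k]} x). -/
/-!  Basic definitions for (associative) conformal algebras, the free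
associative conformal algebra `C(B,N)`, normal words, the weight ordering,
normal `S`-words, compositions and Gröbner–Shirshov bases, following
Ni–Chen, "A new Composition-Diamond lemma for associative conformal algebras". -/

universe u v w

open scoped BigOperators

/-- A conformal algebra over a field `K`. -/
structure ConformalAlgebra (K : Type u) [Field K] (C : Type w)
    [AddCommGroup C] [Module K C] where
  mul : ℕ → C →ₗ[K] C →ₗ[K] C
  D : C →ₗ[K] C
  locality : ∀ a b : C, ∃ N : ℕ, ∀ n : ℕ, N ≤ n → mul n a b = 0
  leibniz : ∀ (n : ℕ) (a b : C), D (mul n a b) = mul n (D a) b + mul n a (D b)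
  D_mul : ∀ (n : ℕ) (a b : C), 0 < n → mul n (D a) b = -((n : K) • mul (n - 1) a b)
  D_mul_zero : ∀ a b : C, mul 0 (D a) b = 0

/-- An associative conformal algebra. -/
structure AssocConformalAlgebra (K : Type u) [Field K] (C : Type w)
    [AddCommGroup C] [Module K C] extends ConformalAlgebra K C where
  assoc : ∀ (n m : ℕ) (a b c : C),
    mul m (mul n a b) c =
      ∑ t ∈ Finset.range (n + 1),
        ((-1 : K) ^ t * (n.choose t : K)) • mul (n - t) a (mul (m + t) b c)

variable {K : Type u} [Field K] {C : Type w} [AddCommGroup C] [Module K C]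

/-- The conjugate sum `{y_(n) x} = Σ_{m≥0} (-1)^{n+m} (1/m!) D^m (f (n+m) y x)`;
a finite sum by locality. -/
noncomputable def conjOp (D : C →ₗ[K] C) (f : ℕ → C → C → C) (n : ℕ) (y x : C) : C :=
  ∑ᶠ m : ℕ, ((-1 : K) ^ (n + m) * ((m.factorial : K))⁻¹) • (D ^ m) (f (n + m) y x)

/-- The conformal commutator `x_[n] y = x_(n) y − {y_(n) x}`. -/
noncomputable def cBracket (A : AssocConformalAlgebra K C) (n : ℕ) (x y : C) : C :=
  A.mul n x y - conjOp A.D (fun m u v => A.mul m u v) n y x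

/-- An associative normal word `b₁_(n₁) ⋯ b_k_(n_k) D^i b_{k+1}`. -/
structure NormalWord (B : Type v) (N : ℕ) where
  body : List (B × Fin N)
  last : B
  exp : ℕ

namespace NormalWord

variable {B : Type v} {N : ℕ}

/-- `u D^i` : raise the final `D`-exponent by `i`. -/
def shiftD (u : NormalWord B N) (i : ℕ) : NormalWord B N := ⟨u.body, u.last, u.exp + i⟩

/-- Concatenation `a_(n) u` of a `D`-free word `a` with `u`. -/
def concat (u : NormalWord B N) (n : Fin N) (v : NormalWord B N) : NormalWord B N :=
  ⟨u.body ++ (u.last, n) :: v.body, v.last, v.exp⟩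

/-- `u^{\D} ♮ v` : drop the final `D`-exponent of `u` and concatenate with `v`,
all junction indices being `N − 1`. -/
def natMul (u v : NormalWord B N) (hN : 0 < N) : NormalWord B N :=
  ⟨u.body ++ (u.last, ⟨N - 1, Nat.sub_lt hN one_pos⟩) ::
      v.body.map (fun p => (p.1, (⟨N - 1, Nat.sub_lt hN one_pos⟩ : Fin N))),
    v.last, v.exp⟩

end NormalWord

/-- The strict weight ordering on associative normal words: compare lengths,
then the body lexicographically, then the last letter, then the `D`-exponent. -/
def wtLT {B : Type v} {N : ℕ} (r : B → B → Prop) (u v : NormalWord B N) : Prop :=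
  u.body.length < v.body.length ∨
    (u.body.length = v.body.length ∧
      (List.Lex (Prod.Lex r (· < ·)) u.body v.body ∨
        (u.body = v.body ∧ (r u.last v.last ∨ (u.last = v.last ∧ u.exp < v.exp)))))

def wtLE {B : Type v} {N : ℕ} (r : B → B → Prop) (u v : NormalWord B N) : Prop :=
  wtLT r u v ∨ u = v

/-- Words on the alphabet `D^ω(B) = {D^i b}`. -/
inductive CWord (B : Type v) : Type v
  | gen : B → ℕ → CWord B
  | mul : ℕ → CWord B → CWord B → CWord B

/-- Length of a word. -/
def CWord.length {B : Type v} : CWord B → ℕ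
  | .gen _ _ => 1
  | .mul _ u v => u.length + v.length

/-- The free associative conformal algebra `C(B,N)` generated by `B` with
uniformly bounded locality `N`, axiomatized by its universal property. -/
structure FreeAssocConformal (K : Type u) [Field K] (B : Type v) (N : ℕ)
    (C : Type w) [AddCommGroup C] [Module K C] where
  alg : AssocConformalAlgebra K C
  ι : B → C
  loc : ∀ (b b' : B) (n : ℕ), N ≤ n → alg.mul n (ι b) (ι b') = 0
  universal : ∀ (C' : Type w) [AddCommGroup C'] [Module K C']
      (A' : AssocConformalAlgebra K C') (ε : B → C'),
      (∀ (b b' : B) (n : ℕ), N ≤ n → A'.mul n (ε b) (ε b') = 0) →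
      ∃! φ : C →ₗ[K] C', (∀ b, φ (ι b) = ε b) ∧
        (∀ (n : ℕ) (x y : C), φ (alg.mul n x y) = A'.mul n (φ x) (φ y)) ∧
        (∀ x : C, φ (alg.D x) = A'.D (φ x))

variable {B : Type v} {N : ℕ}

/-- Evaluate a `D`-free prefix (a list of letters with indices) applied to `x`,
right-normed. -/
def evalAux (F : FreeAssocConformal K B N C) : List (B × Fin N) → C → C
  | [], x => x
  | p :: rest, x => F.alg.mul (p.2 : ℕ) (F.ι p.1) (evalAux F rest x)

/-- The element of `C(B,N)` given by a normal word (right-normed bracketing). -/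
def evalWord (F : FreeAssocConformal K B N C) (u : NormalWord B N) : C :=
  evalAux F u.body ((F.alg.D ^ u.exp) (F.ι u.last))

/-- Evaluate an arbitrary word on `D^ω(B)` in `C(B,N)`. -/
def evalCWord (F : FreeAssocConformal K B N C) : CWord B → C
  | .gen b i => (F.alg.D ^ i) (F.ι b)
  | .mul n u v => F.alg.mul n (evalCWord F u) (evalCWord F v)

/-- `w` is the leading word `\bar f` of `f` with respect to the normal-word
basis `bas` and the weight ordering induced by `r`. -/
def IsLead (bas : Module.Basis (NormalWord B N) K C) (r : B → B → Prop)
    (f : C) (w : NormalWord B N) : Prop :=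
  bas.repr f w ≠ 0 ∧ ∀ w', bas.repr f w' ≠ 0 → w' = w ∨ wtLT r w' w

/-- A set of polynomials is monic if each has leading coefficient `1`. -/
def MonicSet (bas : Module.Basis (NormalWord B N) K C) (r : B → B → Prop) (S : Set C) : Prop :=
  ∀ s ∈ S, ∃ w, IsLead bas r s w ∧ bas.repr s w = 1

/-- Normal `S`-words together with their (formal) leading words:
either `[a_(n) s_(m) c]` with `a, \bar s` `D`-free, or `[a_(n) D^i s]`
with `a` `D`-free; the prefix `a_(n)` is encoded by the list `p`
(empty list = empty `a`). -/
inductive IsNSWord (F : FreeAssocConformal K B N C)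
    (bas : Module.Basis (NormalWord B N) K C) (r : B → B → Prop) (S : Set C) :
    C → NormalWord B N → Prop
  | first (p : List (B × Fin N)) (s : C) (hs : s ∈ S) (sw : NormalWord B N)
      (hlead : IsLead bas r s sw) (hfree : sw.exp = 0) (m : Fin N) (c : NormalWord B N) :
      IsNSWord F bas r S (evalAux F p (F.alg.mul (m : ℕ) s (evalWord F c)))
        ⟨p ++ sw.body ++ (sw.last, m) :: c.body, c.last, c.exp⟩
  | second (p : List (B × Fin N)) (s : C) (hs : s ∈ S) (sw : NormalWord B N)
      (hlead : IsLead bas r s sw) (i : ℕ) :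
      IsNSWord F bas r S (evalAux F p ((F.alg.D ^ i) s)) ⟨p ++ sw.body, sw.last, sw.exp + i⟩

/-- `h` can be written as a linear combination of normal `S`-words whose
(formal leading) words all satisfy `P`. -/
def SRep (F : FreeAssocConformal K B N C) (bas : Module.Basis (NormalWord B N) K C)
    (r : B → B → Prop) (S : Set C) (h : C) (P : NormalWord B N → Prop) : Prop :=
  ∃ (n : ℕ) (α : Fin n → K) (g : Fin n → C) (wd : Fin n → NormalWord B N),
    h = ∑ i, α i • g i ∧ ∀ i, IsNSWord F bas r S (g i) (wd i) ∧ P (wd i)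

/-- `h` is trivial modulo `S`: a linear combination of normal `S`-words with
leading words `≤ \bar h`. -/
def TrivialMod (F : FreeAssocConformal K B N C) (bas : Module.Basis (NormalWord B N) K C)
    (r : B → B → Prop) (S : Set C) (h : C) : Prop :=
  SRep F bas r S h (fun wd => ∀ hw, IsLead bas r h hw → wtLE r wd hw)

/-- `f` is not `D`-free: some monomial has positive `D`-exponent. -/
def NotDFree (bas : Module.Basis (NormalWord B N) K C) (f : C) : Prop :=
  ∃ w, bas.repr f w ≠ 0 ∧ w.exp ≠ 0

/-- All left multiplication compositions `b_(n) s`, `n ≥ N`, are trivial. -/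
def LeftMultClosed (F : FreeAssocConformal K B N C) (bas : Module.Basis (NormalWord B N) K C)
    (r : B → B → Prop) (S : Set C) : Prop :=
  ∀ s ∈ S, ∀ (b : B) (n : ℕ), N ≤ n → TrivialMod F bas r S (F.alg.mul n (F.ι b) s)

/-- All right multiplication compositions `s_(n) b` (for `\bar s` not `D`-free
and `n < N`, or `s` not `D`-free and `n ≥ N`) are trivial. -/
def RightMultClosed (F : FreeAssocConformal K B N C) (bas : Module.Basis (NormalWord B N) K C)
    (r : B → B → Prop) (S : Set C) : Prop :=
  ∀ s ∈ S, ∀ (b : B) (n : ℕ),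
    ((∃ sw, IsLead bas r s sw ∧ sw.exp ≠ 0) ∧ n < N) ∨ (NotDFree bas s ∧ N ≤ n) →
    TrivialMod F bas r S (F.alg.mul n s (F.ι b))

/-- `S` is a Gröbner–Shirshov basis in `C(B,N)`: `S` is monic and all
compositions (inclusion, right inclusion, intersection, right intersection,
left and right multiplication) are trivial modulo `S`. -/
def IsGSBasis (F : FreeAssocConformal K B N C) (bas : Module.Basis (NormalWord B N) K C)
    (r : B → B → Prop) (S : Set C) : Prop :=
  MonicSet bas r S ∧
  -- inclusion: \bar f = a_(n) \bar g_(m) c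
  (∀ f ∈ S, ∀ g ∈ S, ∀ fw gw : NormalWord B N,
    IsLead bas r f fw → IsLead bas r g gw → gw.exp = 0 →
    ∀ (p : List (B × Fin N)) (m : Fin N) (c : NormalWord B N),
      fw = ⟨p ++ sw₁ p gw m c, c.last, c.exp⟩ →
      TrivialMod F bas r S (f - evalAux F p (F.alg.mul (m : ℕ) g (evalWord F c)))) ∧
  -- right inclusion: \bar f = a_(n) \bar g D^i
  (∀ f ∈ S, ∀ g ∈ S, ∀ fw gw : NormalWord B N,
    IsLead bas r f fw → IsLead bas r g gw →
    ∀ (p : List (B × Fin N)) (i : ℕ),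
      fw = ⟨p ++ gw.body, gw.last, gw.exp + i⟩ →
      TrivialMod F bas r S (f - evalAux F p ((F.alg.D ^ i) g))) ∧
  -- intersection: w = \bar f_(m) c = a_(n) \bar g, |\bar f| + |\bar g| > |w|
  (∀ f ∈ S, ∀ g ∈ S, ∀ fw gw : NormalWord B N,
    IsLead bas r f fw → IsLead bas r g gw → fw.exp = 0 →
    ∀ (p : List (B × Fin N)) (m : Fin N) (c : NormalWord B N),
      fw.body ++ (fw.last, m) :: c.body = p ++ gw.body →
      c.last = gw.last → c.exp = gw.exp →
      p.length < fw.body.length + 1 →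
      TrivialMod F bas r S (F.alg.mul (m : ℕ) f (evalWord F c) - evalAux F p g)) ∧
  -- right intersection: w = \bar f D^i = a_(n) \bar g, i > 0
  (∀ f ∈ S, ∀ g ∈ S, ∀ fw gw : NormalWord B N,
    IsLead bas r f fw → IsLead bas r g gw →
    ∀ (p : List (B × Fin N)) (i : ℕ), 0 < i →
      fw.body = p ++ gw.body → fw.last = gw.last → fw.exp + i = gw.exp →
      TrivialMod F bas r S ((F.alg.D ^ i) f - evalAux F p g)) ∧
  LeftMultClosed F bas r S ∧ RightMultClosed F bas r S
where sw₁ (p : List (B × Fin N)) (gw : NormalWord B N) (m : Fin N) (c : NormalWord B N) :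
    List (B × Fin N) := gw.body ++ (gw.last, m) :: c.body

/-- The set of `S`-irreducible normal words. -/
def Irr (F : FreeAssocConformal K B N C) (bas : Module.Basis (NormalWord B N) K C)
    (r : B → B → Prop) (S : Set C) : Set (NormalWord B N) :=
  {w | ¬ ∃ g : C, IsNSWord F bas r S g w}

/-- Membership in the (conformal) ideal generated by `S`. -/
inductive InIdeal (F : FreeAssocConformal K B N C) (S : Set C) : C → Prop
  | mem {s : C} : s ∈ S → InIdeal F S s
  | zero : InIdeal F S 0
  | add {x y : C} : InIdeal F S x → InIdeal F S y → InIdeal F S (x + y)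
  | smul (a : K) {x : C} : InIdeal F S x → InIdeal F S (a • x)
  | deriv {x : C} : InIdeal F S x → InIdeal F S (F.alg.D x)
  | mul_left (n : ℕ) (y : C) {x : C} : InIdeal F S x → InIdeal F S (F.alg.mul n y x)
  | mul_right (n : ℕ) (y : C) {x : C} : InIdeal F S x → InIdeal F S (F.alg.mul n x y)

/-- The ideal generated by `S`, as a submodule. -/
def idealOf (F : FreeAssocConformal K B N C) (S : Set C) : Submodule K C where
  carrier := {x | InIdeal F S x}
  add_mem' := fun hx hy => InIdeal.add hx hy
  zero_mem' := InIdeal.zero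
  smul_mem' := fun a _ hx => InIdeal.smul a hx

/-- `S`-words: words containing exactly one occurrence of some `D^i s`, `s ∈ S`. -/
inductive IsSWord (F : FreeAssocConformal K B N C) (S : Set C) : C → Prop
  | base {s : C} (hs : s ∈ S) (i : ℕ) : IsSWord F S ((F.alg.D ^ i) s)
  | mul_right {u : C} (hu : IsSWord F S u) (v : CWord B) (m : ℕ) :
      IsSWord F S (F.alg.mul m u (evalCWord F v))
  | mul_left {u : C} (hu : IsSWord F S u) (v : CWord B) (m : ℕ) :
      IsSWord F S (F.alg.mul m (evalCWord F v) u)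

/-- A reduced set: every monomial of each `s ∈ S` is `(S∖{s})`-irreducible. -/
def IsReducedSet (F : FreeAssocConformal K B N C) (bas : Module.Basis (NormalWord B N) K C)
    (r : B → B → Prop) (S : Set C) : Prop :=
  ∀ s ∈ S, ∀ w, bas.repr s w ≠ 0 → w ∈ Irr F bas r (S \ {s})


/-- Auxiliary: alternating sum of inverse factorials. -/
theorem cBracket_aux_coeffsum {K : Type*} [Field K] [CharZero K] (s : ℕ) :
    (∑ m ∈ Finset.range (s+1),
        (-1:K)^(s-m) * ((m.factorial:K)⁻¹ * ((s-m).factorial:K)⁻¹))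
      = if s = 0 then 1 else 0 := by
  have h1 : ∀ m ∈ Finset.range (s+1),
      (-1:K)^(s-m) * ((m.factorial:K)⁻¹ * ((s-m).factorial:K)⁻¹)
        = ((s.factorial:K))⁻¹ * ((-1:K)^(s-m) * (s.choose m : K)) := by
    intro m hm
    rw [Finset.mem_range, Nat.lt_succ_iff] at hm
    rw [Nat.cast_choose K hm]
    have h2 : (m.factorial : K) ≠ 0 := Nat.cast_ne_zero.2 m.factorial_ne_zero
    have h3 : ((s-m).factorial : K) ≠ 0 := Nat.cast_ne_zero.2 (s-m).factorial_ne_zero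
    have h4 : (s.factorial : K) ≠ 0 := Nat.cast_ne_zero.2 s.factorial_ne_zero
    field_simp
  rw [Finset.sum_congr rfl h1, ← Finset.mul_sum]
  have hrefl : (∑ m ∈ Finset.range (s+1), (-1:K)^(s-m) * (s.choose m : K))
      = ∑ m ∈ Finset.range (s+1), (-1:K)^m * (s.choose m : K) := by
    rw [← Finset.sum_range_reflect]
    refine Finset.sum_congr rfl fun j hj => ?_
    rw [Finset.mem_range, Nat.lt_succ_iff] at hj
    simp only [Nat.add_sub_cancel]
    rw [Nat.sub_sub_self hj, Nat.choose_symm hj]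
  rw [hrefl]
  have halt := Int.alternating_sum_range_choose (n := s)
  have hc : (∑ m ∈ Finset.range (s+1), (-1:K)^m * (s.choose m : K))
      = ((∑ m ∈ Finset.range (s + 1), ((-1) ^ m * s.choose m : ℤ) : ℤ) : K) := by
    push_cast; exact Finset.sum_congr rfl fun _ _ => by ring
  rw [hc, halt]
  rcases eq_or_ne s 0 with h | h <;> simp [h, Nat.factorial]

/-- Auxiliary: `conjOp` as a finite sum when the products vanish eventually. -/
theorem conjOp_eq_sum (D : C →ₗ[K] C) (f : ℕ → C → C → C) (n L : ℕ) (y x : C)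
    (h : ∀ m, L ≤ m → f m y x = 0) :
    conjOp D f n y x = ∑ m ∈ Finset.range L,
      ((-1 : K) ^ (n + m) * ((m.factorial : K))⁻¹) • (D ^ m) (f (n + m) y x) := by
  refine finsum_eq_sum_of_support_subset _ ?_
  intro m hm
  simp only [Function.mem_support, ne_eq] at hm
  by_contra hmem
  simp only [Finset.coe_range, Set.mem_Iio, not_lt] at hmem
  exact hm (by rw [h (n + m) (le_trans hmem (Nat.le_add_left m n))]; simp)

theorem cBracket_anticomm {K : Type u} [Field K] [CharZero K]
    {C : Type w} [AddCommGroup C] [Module K C]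
    (A : AssocConformalAlgebra K C) (n : ℕ) (x y : C) :
    cBracket A n x y = - conjOp A.D (fun m u v => cBracket A m u v) n y x := by
  classical
  obtain ⟨N₁, h₁⟩ := A.locality x y
  obtain ⟨N₂, h₂⟩ := A.locality y x
  set M := max N₁ N₂ with hM
  have hxy : ∀ m, M ≤ m → A.mul m x y = 0 :=
    fun m hm => h₁ m (le_trans (le_max_left _ _) hm)
  have hyx : ∀ m, M ≤ m → A.mul m y x = 0 :=
    fun m hm => h₂ m (le_trans (le_max_right _ _) hm)
  have hconj_zero : ∀ m, M ≤ m → conjOp A.D (fun m u v => A.mul m u v) m x y = 0 := by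
    intro m hm
    refine finsum_eq_zero_of_forall_eq_zero fun k => ?_
    simp only []
    rw [hxy (m + k) (le_trans hm (Nat.le_add_right m k))]; simp
  have hbr_zero : ∀ m, M ≤ m → cBracket A m y x = 0 := by
    intro m hm
    rw [cBracket, hyx m hm, hconj_zero m hm]; simp
  -- the double-sum involution identity
  set g : ℕ → C := fun s => A.mul (n + s) x y with hg_def
  have hg : ∀ s, M ≤ s → g s = 0 :=
    fun s hs => hxy (n + s) (le_trans hs (Nat.le_add_left s n))
  set t : ℕ → ℕ → C := fun m k =>
    ((-1 : K) ^ k * ((m.factorial : K)⁻¹ * (k.factorial : K)⁻¹)) • (A.D ^ (m + k)) (g (m + k))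
    with ht_def
  have ht0 : ∀ m k, M ≤ m + k → t m k = 0 := by
    intro m k h; simp only [ht_def, hg (m + k) h, map_zero, smul_zero]
  have key : (∑ m ∈ Finset.range M, ∑ k ∈ Finset.range M, t m k) = g 0 := by
    have stepA : ∀ m, (∑ k ∈ Finset.range M, t m k) = ∑ k ∈ Finset.range (M - m), t m k := by
      intro m
      refine (Finset.sum_subset (Finset.range_subset_range.2 (Nat.sub_le M m)) ?_).symm
      intro k hk hnk
      rw [Finset.mem_range] at hk hnk
      exact ht0 m k (by omega)
    have stepB : ∀ m, (∑ k ∈ Finset.range (M - m), t m k)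
        = ∑ s ∈ Finset.Ico m M, t m (s - m) := by
      intro m
      rw [Finset.sum_Ico_eq_sum_range]
      exact Finset.sum_congr rfl fun i _ => by rw [Nat.add_sub_cancel_left]
    calc (∑ m ∈ Finset.range M, ∑ k ∈ Finset.range M, t m k)
        = ∑ m ∈ Finset.Ico 0 M, ∑ s ∈ Finset.Ico m M, t m (s - m) := by
          rw [← Finset.range_eq_Ico]
          exact Finset.sum_congr rfl fun m _ => by rw [stepA m, stepB m]
      _ = ∑ s ∈ Finset.Ico 0 M, ∑ m ∈ Finset.Ico 0 (s + 1), t m (s - m) :=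
          Finset.sum_Ico_Ico_comm 0 M _
      _ = ∑ s ∈ Finset.range M, (if s = 0 then (1 : K) else 0) • (A.D ^ s) (g s) := by
          rw [← Finset.range_eq_Ico]
          refine Finset.sum_congr rfl fun s _ => ?_
          have hterm : ∀ m ∈ Finset.range (s + 1),
              t m (s - m) = ((-1 : K) ^ (s - m) *
                ((m.factorial : K)⁻¹ * ((s - m).factorial : K)⁻¹)) • (A.D ^ s) (g s) := by
            intro m hm
            rw [Finset.mem_range, Nat.lt_succ_iff] at hm
            simp only [ht_def, Nat.add_sub_cancel' hm]
          rw [← Finset.range_eq_Ico, Finset.sum_congr rfl hterm, ← Finset.sum_smul, cBracket_aux_coeffsum s]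
      _ = g 0 := by
          rcases Nat.eq_zero_or_pos M with hM0 | hM0
          · rw [hM0]
            simp [hg 0 (by omega)]
          · rw [Finset.sum_eq_single_of_mem 0 (Finset.mem_range.2 hM0)
              (fun s _ hs => by simp [hs])]
            simp
  -- expand the finsums into finite sums
  rw [cBracket, conjOp_eq_sum A.D (fun m u v => cBracket A m u v) n M y x hbr_zero,
    conjOp_eq_sum A.D (fun m u v => A.mul m u v) n M y x hyx]
  have hexp : ∀ m, cBracket A (n + m) y x
      = A.mul (n + m) y x - ∑ k ∈ Finset.range M,
          ((-1 : K) ^ (n + m + k) * ((k.factorial : K))⁻¹) • (A.D ^ k) (g (m + k)) := by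
    intro m
    rw [cBracket, conjOp_eq_sum A.D (fun m u v => A.mul m u v) (n + m) M x y hxy]
    congr 1
    exact Finset.sum_congr rfl fun k _ => by rw [hg_def]; ring_nf
  have hsplit : ∀ m, ((-1 : K) ^ (n + m) * ((m.factorial : K))⁻¹) •
        (A.D ^ m) (cBracket A (n + m) y x)
      = ((-1 : K) ^ (n + m) * ((m.factorial : K))⁻¹) • (A.D ^ m) (A.mul (n + m) y x)
        - ∑ k ∈ Finset.range M, t m k := by
    intro m
    rw [hexp m, map_sub, smul_sub]
    congr 1
    rw [map_sum, Finset.smul_sum]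
    refine Finset.sum_congr rfl fun k _ => ?_
    rw [map_smul, smul_smul, ht_def]
    have hD : (A.D ^ m) ((A.D ^ k) (g (m + k))) = (A.D ^ (m + k)) (g (m + k)) := by
      rw [pow_add, Module.End.mul_apply]
    rw [hD]
    congr 1
    have hsign : (-1 : K) ^ (n + m) * (-1 : K) ^ (n + m + k) = (-1 : K) ^ k := by
      rw [← pow_add]
      have he : n + m + (n + m + k) = 2 * (n + m) + k := by ring
      rw [he, pow_add, pow_mul, neg_one_sq, one_pow, one_mul]
    rw [← hsign]
    ring
  rw [Finset.sum_congr rfl (fun m _ => hsplit m), Finset.sum_sub_distrib, key]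
  have hgoal : A.mul n x y = g 0 := by simp [hg_def]
  rw [hgoal]
  abel
end

section
/- Any word on the alphabet D^ω(B) = { D^i b : b ∈ B, i ≥ 0 } in the free associative conformal algebra C(B, N) (formed by arbitrary bracketings and products (u)_{(n)}(v)) is equal in C(B, N) to a linear combination of normal words of the same length, i.e., right-normed bracketed words b₁_{(n₁)}(b₂_{(n₂)} ⋯ (b_k_{(n_k)} D^i b_{k+1})⋯) with all n_j < N. -/
/-!  Basic definitions for (associative) conformal algebras, the free
associative conformal algebra `C(B,N)`, normal words, the weight ordering,
normal `S`-words, compositions and Gröbner–Shirshov bases, following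
Ni–Chen, "A new Composition-Diamond lemma for associative conformal algebras". -/

universe u v w

open scoped BigOperators

variable {K : Type u} [Field K] {C : Type w} [AddCommGroup C] [Module K C]

variable {B : Type v} {N : ℕ}

/-! ### Auxiliary machinery for Statement 6 -/

section AuxNormal

variable (F : FreeAssocConformal K B N C)

/-- The set of evaluations of normal words of total length `k`. -/
def auxNwSet (k : ℕ) : Set C :=
  {x | ∃ u : NormalWord B N, u.body.length + 1 = k ∧ evalWord F u = x}

/-- The span of normal words of total length `k`. -/
def auxSpanNW (k : ℕ) : Submodule K C := Submodule.span K (auxNwSet F k)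

lemma aux_Bsmall (b : B) (n : ℕ) (hn : n < N) {k : ℕ} {x : C} (hx : x ∈ auxSpanNW F k) :
    F.alg.mul n (F.ι b) x ∈ auxSpanNW F (k + 1) := by
  refine Submodule.span_induction
    (p := fun x _ => F.alg.mul n (F.ι b) x ∈ auxSpanNW F (k + 1)) ?_ ?_ ?_ ?_ hx
  · rintro x ⟨u, hu, rfl⟩
    refine Submodule.subset_span ⟨⟨(b, ⟨n, hn⟩) :: u.body, u.last, u.exp⟩, ?_, rfl⟩
    simp only [List.length_cons]; omega
  · beta_reduce; rw [map_zero]; exact zero_mem _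
  · intro x y _ _ hx hy; beta_reduce; rw [map_add]; exact add_mem hx hy
  · intro a x _ hx; beta_reduce; rw [map_smul]; exact Submodule.smul_mem _ _ hx

lemma aux_D_evalWord (u : NormalWord B N) :
    F.alg.D (evalWord F u) ∈ auxSpanNW F (u.body.length + 1) := by
  obtain ⟨body, last, exp⟩ := u
  induction body with
  | nil =>
    refine Submodule.subset_span ⟨⟨[], last, exp + 1⟩, rfl, ?_⟩
    show (F.alg.D ^ (exp + 1)) (F.ι last) = F.alg.D ((F.alg.D ^ exp) (F.ι last))
    rw [pow_succ']; rfl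
  | cons p rest ih =>
    have hy : evalWord F ⟨p :: rest, last, exp⟩
        = F.alg.mul (p.2 : ℕ) (F.ι p.1) (evalWord F ⟨rest, last, exp⟩) := rfl
    simp only [List.length_cons]
    rw [hy, F.alg.leibniz]
    refine add_mem ?_ (aux_Bsmall F p.1 (p.2 : ℕ) p.2.isLt ih)
    rcases Nat.eq_zero_or_pos (p.2 : ℕ) with h0 | h0
    · rw [h0, F.alg.D_mul_zero]; exact zero_mem _
    · rw [F.alg.D_mul _ _ _ h0]
      refine neg_mem (Submodule.smul_mem _ _ ?_)
      have hlt : (p.2 : ℕ) - 1 < N := lt_of_le_of_lt (Nat.sub_le _ _) p.2.isLt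
      exact Submodule.subset_span
        ⟨⟨(p.1, ⟨(p.2 : ℕ) - 1, hlt⟩) :: rest, last, exp⟩, by simp, rfl⟩

lemma aux_D_span {k : ℕ} {x : C} (hx : x ∈ auxSpanNW F k) : F.alg.D x ∈ auxSpanNW F k := by
  refine Submodule.span_induction
    (p := fun x _ => F.alg.D x ∈ auxSpanNW F k) ?_ ?_ ?_ ?_ hx
  · rintro x ⟨u, hu, rfl⟩; exact hu ▸ aux_D_evalWord F u
  · beta_reduce; rw [map_zero]; exact zero_mem _
  · intro x y _ _ hx hy; beta_reduce; rw [map_add]; exact add_mem hx hy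
  · intro a x _ hx; beta_reduce; rw [map_smul]; exact Submodule.smul_mem _ _ hx

lemma aux_Bgen (b b' : B) : ∀ (i m : ℕ),
    F.alg.mul m (F.ι b) ((F.alg.D ^ i) (F.ι b')) ∈ auxSpanNW F 2 := by
  intro i
  induction i with
  | zero =>
    intro m
    by_cases hm : m < N
    · exact Submodule.subset_span ⟨⟨[(b, ⟨m, hm⟩)], b', 0⟩, rfl, rfl⟩
    · rw [pow_zero, Module.End.one_apply, F.loc b b' m (le_of_not_gt hm)]
      exact zero_mem _
  | succ i ih =>
    intro m
    have hstep : (F.alg.D ^ (i + 1)) (F.ι b') = F.alg.D ((F.alg.D ^ i) (F.ι b')) := by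
      rw [pow_succ']; rfl
    rw [hstep]
    have hkey : F.alg.mul m (F.ι b) (F.alg.D ((F.alg.D ^ i) (F.ι b')))
        = F.alg.D (F.alg.mul m (F.ι b) ((F.alg.D ^ i) (F.ι b')))
          - F.alg.mul m (F.alg.D (F.ι b)) ((F.alg.D ^ i) (F.ι b')) := by
      rw [F.alg.leibniz]; abel
    rw [hkey]
    refine sub_mem (aux_D_span F (ih m)) ?_
    rcases Nat.eq_zero_or_pos m with hm | hm
    · subst hm; rw [F.alg.D_mul_zero]; exact zero_mem _
    · rw [F.alg.D_mul m _ _ hm]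
      exact neg_mem (Submodule.smul_mem _ _ (ih (m - 1)))

lemma aux_Bword : ∀ (L m : ℕ) (u : NormalWord B N), u.body.length = L → ∀ b : B,
    F.alg.mul m (F.ι b) (evalWord F u) ∈ auxSpanNW F (L + 2) := by
  intro L
  induction L using Nat.strong_induction_on with
  | _ L ihL =>
  intro m
  induction m using Nat.strong_induction_on with
  | _ m ihm =>
  intro u hu b
  by_cases hm : m < N
  · have heq : F.alg.mul m (F.ι b) (evalWord F u)
        = evalWord F ⟨(b, ⟨m, hm⟩) :: u.body, u.last, u.exp⟩ := rfl
    rw [heq]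
    exact Submodule.subset_span ⟨_, by simp only [List.length_cons]; omega, rfl⟩
  · push_neg at hm
    obtain ⟨body, last, exp⟩ := u
    cases body with
    | nil =>
      simp only [List.length_nil] at hu
      subst hu
      exact aux_Bgen F b last exp m
    | cons p rest =>
      simp only [List.length_cons] at hu
      set y := evalWord F ⟨rest, last, exp⟩ with hydef
      have hy : evalWord F ⟨p :: rest, last, exp⟩ = F.alg.mul (p.2 : ℕ) (F.ι p.1) y := rfl
      have hA := F.alg.assoc m (p.2 : ℕ) (F.ι b) (F.ι p.1) y
      rw [F.loc b p.1 m hm] at hA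
      simp only [map_zero, LinearMap.zero_apply] at hA
      rw [Finset.sum_range_succ'] at hA
      simp only [pow_zero, Nat.choose_zero_right, Nat.cast_one, one_mul, one_smul,
        Nat.sub_zero, Nat.add_zero] at hA
      have hmain := eq_neg_of_add_eq_zero_right hA.symm
      rw [hy, hmain]
      refine neg_mem (Submodule.sum_mem _ ?_)
      intro t ht
      rw [Finset.mem_range] at ht
      refine Submodule.smul_mem _ _ ?_
      have hinner : F.alg.mul ((p.2 : ℕ) + (t + 1)) (F.ι p.1) y
          ∈ auxSpanNW F (rest.length + 2) :=
        ihL rest.length (by omega) ((p.2 : ℕ) + (t + 1)) ⟨rest, last, exp⟩ rfl p.1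
      have hL1 : rest.length + 2 = L + 1 := by omega
      rw [hL1] at hinner
      refine Submodule.span_induction
        (p := fun x _ => F.alg.mul (m - (t + 1)) (F.ι b) x ∈ auxSpanNW F (L + 2))
        ?_ ?_ ?_ ?_ hinner
      · rintro x ⟨u', hu', rfl⟩
        exact ihm (m - (t + 1)) (by omega) u' (by omega) b
      · beta_reduce; rw [map_zero]; exact zero_mem _
      · intro x z _ _ hx hz; beta_reduce; rw [map_add]; exact add_mem hx hz
      · intro a x _ hx; beta_reduce; rw [map_smul]; exact Submodule.smul_mem _ _ hx

lemma aux_Bspan (b : B) (m : ℕ) {l : ℕ} {x : C} (hx : x ∈ auxSpanNW F l) :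
    F.alg.mul m (F.ι b) x ∈ auxSpanNW F (l + 1) := by
  refine Submodule.span_induction
    (p := fun x _ => F.alg.mul m (F.ι b) x ∈ auxSpanNW F (l + 1)) ?_ ?_ ?_ ?_ hx
  · rintro x ⟨u, hu, rfl⟩
    have h2 : u.body.length + 2 = l + 1 := by omega
    exact h2 ▸ aux_Bword F u.body.length m u rfl b
  · beta_reduce; rw [map_zero]; exact zero_mem _
  · intro x y _ _ hx hy; beta_reduce; rw [map_add]; exact add_mem hx hy
  · intro a x _ hx; beta_reduce; rw [map_smul]; exact Submodule.smul_mem _ _ hx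

lemma aux_mulDred : ∀ (i m : ℕ) (a x : C), ∃ (c : K) (m' : ℕ),
    F.alg.mul m ((F.alg.D ^ i) a) x = c • F.alg.mul m' a x := by
  intro i
  induction i with
  | zero => intro m a x; exact ⟨1, m, by simp⟩
  | succ i ih =>
    intro m a x
    have hstep : (F.alg.D ^ (i + 1)) a = (F.alg.D ^ i) (F.alg.D a) := by
      rw [pow_succ]; rfl
    rw [hstep]
    obtain ⟨c, m', h⟩ := ih m (F.alg.D a) x
    rw [h]
    rcases Nat.eq_zero_or_pos m' with h0 | h0
    · subst h0; rw [F.alg.D_mul_zero]; exact ⟨0, 0, by simp⟩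
    · rw [F.alg.D_mul m' _ _ h0]
      refine ⟨-(c * (m' : K)), m' - 1, ?_⟩
      rw [smul_neg, smul_smul]
      exact (neg_smul _ _).symm

lemma aux_Cword : ∀ (body : List (B × Fin N)) (last : B) (exp m l : ℕ) (x : C),
    x ∈ auxSpanNW F l →
    F.alg.mul m (evalWord F ⟨body, last, exp⟩) x ∈ auxSpanNW F (body.length + 1 + l) := by
  intro body
  induction body with
  | nil =>
    intro last exp m l x hx
    obtain ⟨c, m', h⟩ := aux_mulDred F exp m (F.ι last) x
    have heq : evalWord F ⟨[], last, exp⟩ = (F.alg.D ^ exp) (F.ι last) := rfl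
    rw [heq, h]
    have hl : (List.nil (α := B × Fin N)).length + 1 + l = l + 1 := by simp; omega
    rw [hl]
    exact Submodule.smul_mem _ _ (aux_Bspan F last m' hx)
  | cons p rest ih =>
    intro last exp m l x hx
    have hy : evalWord F ⟨p :: rest, last, exp⟩
        = F.alg.mul (p.2 : ℕ) (F.ι p.1) (evalWord F ⟨rest, last, exp⟩) := rfl
    rw [hy, F.alg.assoc (p.2 : ℕ) m (F.ι p.1) (evalWord F ⟨rest, last, exp⟩) x]
    refine Submodule.sum_mem _ ?_
    intro t ht
    refine Submodule.smul_mem _ _ ?_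
    have hinner := ih last exp (m + t) l x hx
    have hlt : (p.2 : ℕ) - t < N := lt_of_le_of_lt (Nat.sub_le _ _) p.2.isLt
    have houter := aux_Bsmall F p.1 ((p.2 : ℕ) - t) hlt hinner
    have hln : rest.length + 1 + l + 1 = (p :: rest).length + 1 + l := by
      simp only [List.length_cons]; omega
    exact hln ▸ houter

lemma aux_Cword' (u : NormalWord B N) (m l : ℕ) {x : C} (hx : x ∈ auxSpanNW F l) :
    F.alg.mul m (evalWord F u) x ∈ auxSpanNW F (u.body.length + 1 + l) := by
  obtain ⟨body, last, exp⟩ := u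
  exact aux_Cword F body last exp m l x hx

lemma aux_evalC_mem : ∀ w : CWord B, evalCWord F w ∈ auxSpanNW F w.length := by
  intro w
  induction w with
  | gen b i => exact Submodule.subset_span ⟨⟨[], b, i⟩, rfl, rfl⟩
  | mul n u v ihu ihv =>
    show F.alg.mul n (evalCWord F u) (evalCWord F v)
        ∈ auxSpanNW F (u.length + v.length)
    refine Submodule.span_induction
      (p := fun x _ => F.alg.mul n x (evalCWord F v) ∈ auxSpanNW F (u.length + v.length))
      ?_ ?_ ?_ ?_ ihu
    · rintro x ⟨u', hu', rfl⟩
      have h2 : u'.body.length + 1 + v.length = u.length + v.length := by omega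
      exact h2 ▸ aux_Cword' F u' n v.length ihv
    · beta_reduce; rw [map_zero, LinearMap.zero_apply]; exact zero_mem _
    · intro x y _ _ hx hy; beta_reduce; rw [map_add, LinearMap.add_apply]; exact add_mem hx hy
    · intro a x _ hx; beta_reduce; rw [map_smul, LinearMap.smul_apply]; exact Submodule.smul_mem _ _ hx

end AuxNormal

theorem word_eq_lin_comb_normal_words {K : Type u} [Field K] [CharZero K]
    {B : Type v} {N : ℕ} {C : Type w} [AddCommGroup C] [Module K C]
    (F : FreeAssocConformal K B N C) (w : CWord B) :
    ∃ (n : ℕ) (α : Fin n → K) (u : Fin n → NormalWord B N),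
      evalCWord F w = ∑ i, α i • evalWord F (u i) ∧
      ∀ i, (u i).body.length + 1 = w.length := by
  have h := aux_evalC_mem F w
  rw [auxSpanNW, Submodule.mem_span_set'] at h
  obtain ⟨n, f, g, hsum⟩ := h
  refine ⟨n, f, fun i => Classical.choose (g i).2, ?_,
    fun i => (Classical.choose_spec (g i).2).1⟩
  rw [← hsum]
  refine Finset.sum_congr rfl fun i _ => ?_
  rw [(Classical.choose_spec (g i).2).2]
end

section
/- In the free associative conformal algebra C(B, N) with the lexicographic weight ordering on associative normal words, if a ∈ T is D-free (i.e., its D-exponent is 0), 0 ≤ n < N, and u ∈ T, then the leading word of [a]_{(n)}[u] is a_{(n)} u; moreover, if u > v in T then the leading word of [a]_{(n)}[u] is strictly greater than that of [a]_{(n)}[v]. -/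
/-!  Basic definitions for (associative) conformal algebras, the free
associative conformal algebra `C(B,N)`, normal words, the weight ordering,
normal `S`-words, compositions and Gröbner–Shirshov bases, following
Ni–Chen, "A new Composition-Diamond lemma for associative conformal algebras". -/

universe u v w

open scoped BigOperators

variable {K : Type u} [Field K] {C : Type w} [AddCommGroup C] [Module K C]

variable {B : Type v} {N : ℕ}

/-! ### Auxiliary development for Statement 7 -/

section Aux7

open Finset

private lemma sum_tri7 {M : Type*} [AddCommMonoid M] (q : ℕ) (f : ℕ → ℕ → M) :
    ∑ t ∈ range (q+1), ∑ s ∈ range (q+1-t), f t s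
      = ∑ r ∈ range (q+1), ∑ t ∈ range (r+1), f t (r-t) := by
  rw [Finset.sum_sigma', Finset.sum_sigma']
  refine Finset.sum_nbij' (fun p => ⟨p.1 + p.2, p.1⟩) (fun p => ⟨p.2, p.1 - p.2⟩) ?_ ?_ ?_ ?_ ?_
  · rintro ⟨t, s⟩ h
    simp only [mem_sigma, mem_range] at h ⊢
    omega
  · rintro ⟨r, t⟩ h
    simp only [mem_sigma, mem_range] at h ⊢
    omega
  · rintro ⟨t, s⟩ h
    simp only [mem_sigma, mem_range] at h
    simp [Nat.add_sub_cancel_left]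
  · rintro ⟨r, t⟩ h
    simp only [mem_sigma, mem_range] at h
    have h1 : t + (r - t) = r := by omega
    simp [h1]
  · rintro ⟨t, s⟩ h
    simp only [mem_sigma, mem_range] at h
    have h1 : t + s - t = s := by omega
    simp [h1]

private lemma alt_coeff7 {K : Type*} [Field K] (q r : ℕ) (hr : r ≤ q) :
    ∑ t ∈ range (r+1), (q.choose t : K) * ((-1)^(r-t) * ((q-t).choose (r-t) : K))
      = if r = 0 then 1 else 0 := by
  have key : ∀ t ∈ range (r+1),
      (q.choose t : K) * ((-1)^(r-t) * ((q-t).choose (r-t) : K))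
        = (q.choose r : K) * ((-1)^r * ((-1)^t * (r.choose t : K))) := by
    intro t ht
    simp only [mem_range] at ht
    have ht' : t ≤ r := by omega
    have hch : (q.choose r : K) * (r.choose t : K)
        = (q.choose t : K) * ((q - t).choose (r - t) : K) := by
      exact_mod_cast congrArg (Nat.cast : ℕ → K) (Nat.choose_mul (n := q) ht')
    have hsign : ((-1 : K))^(r-t) = (-1)^r * (-1)^t := by
      have h1 : ((-1 : K))^(r-t) * (-1)^t = (-1)^r := by
        rw [← pow_add]; congr 1; omega
      have h2 : ((-1 : K))^t * (-1)^t = 1 := by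
        rw [← pow_add, ← two_mul, pow_mul]; norm_num
      calc ((-1 : K))^(r-t) = ((-1 : K))^(r-t) * ((-1)^t * (-1)^t) := by rw [h2, mul_one]
        _ = (-1)^r * (-1)^t := by rw [← mul_assoc, h1]
    rw [hsign]
    linear_combination (-((-1 : K)^r * (-1)^t)) * hch
  rw [Finset.sum_congr rfl key, ← Finset.mul_sum, ← Finset.mul_sum]
  have halt : ∑ t ∈ range (r+1), ((-1:K)^t * (r.choose t : K)) = if r = 0 then 1 else 0 := by
    have h2 := congrArg (Int.cast : ℤ → K) (Int.alternating_sum_range_choose (n := r))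
    push_cast at h2
    convert h2 using 2
  rw [halt]
  by_cases h : r = 0 <;> simp [h]

variable {K : Type u} [Field K] {B : Type v} {N : ℕ} {C : Type w}
  [AddCommGroup C] [Module K C]

/-- Binomial inversion of conformal associativity. -/
private lemma inv_assoc7 (F : FreeAssocConformal K B N C) (q m : ℕ) (x y z : C) :
    F.alg.mul q x (F.alg.mul m y z)
      = ∑ t ∈ range (q+1), (q.choose t : K) •
          F.alg.mul (m+t) (F.alg.mul (q-t) x y) z := by
  have step1 : ∑ t ∈ range (q+1), (q.choose t : K) •
        F.alg.mul (m+t) (F.alg.mul (q-t) x y) z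
      = ∑ t ∈ range (q+1), ∑ s ∈ range (q+1-t),
          (q.choose t : K) • (((-1:K)^s * ((q-t).choose s : K)) •
            F.alg.mul (q-t-s) x (F.alg.mul (m+t+s) y z)) := by
    refine Finset.sum_congr rfl ?_
    intro t ht
    simp only [mem_range] at ht
    have ht' : t ≤ q := by omega
    have hrange : q - t + 1 = q + 1 - t := by omega
    rw [F.alg.assoc (q-t) (m+t) x y z, Finset.smul_sum, hrange]
  rw [step1, sum_tri7 q (fun t s => (q.choose t : K) • (((-1:K)^s * ((q-t).choose s : K)) •
            F.alg.mul (q-t-s) x (F.alg.mul (m+t+s) y z)))]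
  have step2 : ∀ r ∈ range (q+1), ∑ t ∈ range (r+1),
        (q.choose t : K) • (((-1:K)^(r-t) * ((q-t).choose (r-t) : K)) •
          F.alg.mul (q-t-(r-t)) x (F.alg.mul (m+t+(r-t)) y z))
      = (if r = 0 then (1:K) else 0) • F.alg.mul (q-r) x (F.alg.mul (m+r) y z) := by
    intro r hrr
    simp only [mem_range] at hrr
    have hr : r ≤ q := by omega
    have hterm : ∀ t ∈ range (r+1),
        (q.choose t : K) • (((-1:K)^(r-t) * ((q-t).choose (r-t) : K)) •
          F.alg.mul (q-t-(r-t)) x (F.alg.mul (m+t+(r-t)) y z))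
        = ((q.choose t : K) * ((-1:K)^(r-t) * ((q-t).choose (r-t) : K))) •
            F.alg.mul (q-r) x (F.alg.mul (m+r) y z) := by
      intro t htr
      simp only [mem_range] at htr
      have h1 : q - t - (r-t) = q - r := by omega
      have h2 : m + t + (r-t) = m + r := by omega
      rw [h1, h2, smul_smul]
    rw [Finset.sum_congr rfl hterm, ← Finset.sum_smul, alt_coeff7 q r hr]
  rw [Finset.sum_congr rfl step2]
  have step3 : ∀ r ∈ range (q+1),
      (if r = 0 then (1:K) else 0) • F.alg.mul (q-r) x (F.alg.mul (m+r) y z)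
      = if r = 0 then F.alg.mul (q-r) x (F.alg.mul (m+r) y z) else 0 := by
    intro r _
    by_cases h : r = 0 <;> simp [h]
  rw [Finset.sum_congr rfl step3, Finset.sum_ite_eq' (range (q+1))
    0 (fun r => F.alg.mul (q-r) x (F.alg.mul (m+r) y z))]
  rw [if_pos (Finset.mem_range.mpr (Nat.succ_pos q))]
  simp

variable (F : FreeAssocConformal K B N C) (bas : Module.Basis (NormalWord B N) K C)

/-- Span of normal words with at most `L` letters. -/
private def spanLen (L : ℕ) : Submodule K C :=
  Submodule.span K (bas '' {w : NormalWord B N | w.body.length + 1 ≤ L})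

private lemma spanLen_mono {L L' : ℕ} (h : L ≤ L') : spanLen bas L ≤ spanLen bas L' :=
  Submodule.span_mono (Set.image_mono (fun w hw => le_trans hw h))

/-- Span of normal words strictly smaller than `W`. -/
private def spanLow (r : B → B → Prop) (W : NormalWord B N) : Submodule K C :=
  Submodule.span K (bas '' {w : NormalWord B N | wtLT r w W})

private lemma bas_cons (hbas : ∀ w, bas w = evalWord F w) (c : B) (j : ℕ) (hj : j < N) (w : NormalWord B N) :
    F.alg.mul j (F.ι c) (bas w) = bas ⟨(c, ⟨j, hj⟩) :: w.body, w.last, w.exp⟩ := by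
  rw [hbas, hbas]
  rfl

private lemma mul_gen_mem_len (hbas : ∀ w, bas w = evalWord F w) (c : B) (j : ℕ) (hj : j < N) {L : ℕ} {y : C}
    (hy : y ∈ spanLen bas L) : F.alg.mul j (F.ι c) y ∈ spanLen bas (L+1) := by
  have hle : spanLen bas L ≤ Submodule.comap (F.alg.mul j (F.ι c)) (spanLen bas (L+1)) := by
    rw [spanLen, Submodule.span_le]
    rintro _ ⟨w, hw, rfl⟩
    simp only [SetLike.mem_coe, Submodule.mem_comap]
    rw [bas_cons F bas hbas c j hj w]
    exact Submodule.subset_span ⟨⟨(c, ⟨j, hj⟩) :: w.body, w.last, w.exp⟩,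
      by simpa using Nat.succ_le_succ hw, rfl⟩
  exact hle hy

private lemma D_evalAux_mem (hbas : ∀ w, bas w = evalWord F w) (body : List (B × Fin N)) : ∀ (i : ℕ) (c' : B),
    F.alg.D (evalAux F body ((F.alg.D ^ i) (F.ι c'))) ∈ spanLen bas (body.length + 1) := by
  induction body with
  | nil =>
    intro i c'
    have h1 : F.alg.D ((F.alg.D ^ i) (F.ι c')) = (F.alg.D ^ (i+1)) (F.ι c') := by
      rw [pow_succ']
      rfl
    have h2 : (F.alg.D ^ (i+1)) (F.ι c') = bas ⟨[], c', i+1⟩ := by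
      rw [hbas]
      rfl
    rw [show evalAux F [] ((F.alg.D ^ i) (F.ι c')) = (F.alg.D ^ i) (F.ι c') from rfl, h1, h2]
    refine Submodule.subset_span ⟨⟨[], c', i+1⟩, ?_, rfl⟩
    show ([] : List (B × Fin N)).length + 1 ≤ ([] : List (B × Fin N)).length + 1
    exact le_rfl
  | cons p rest ih =>
    intro i c'
    obtain ⟨c₁, n₁⟩ := p
    set Y := evalAux F rest ((F.alg.D ^ i) (F.ι c')) with hY
    have hYbas : Y = bas ⟨rest, c', i⟩ := by rw [hbas]; rfl
    have hstep : evalAux F ((c₁, n₁) :: rest) ((F.alg.D ^ i) (F.ι c'))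
        = F.alg.mul (n₁ : ℕ) (F.ι c₁) Y := rfl
    rw [hstep, F.alg.leibniz]
    refine Submodule.add_mem _ ?_ ?_
    · rcases Nat.eq_zero_or_pos (n₁ : ℕ) with h0 | h0
      · rw [show ((n₁ : ℕ)) = 0 from h0, F.alg.D_mul_zero]
        exact Submodule.zero_mem _
      · rw [F.alg.D_mul _ _ _ h0]
        refine Submodule.neg_mem _ (Submodule.smul_mem _ _ ?_)
        rw [hYbas, bas_cons F bas hbas c₁ ((n₁ : ℕ) - 1) (by have := n₁.2; omega)]
        refine Submodule.subset_span ⟨_, ?_, rfl⟩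
        show ((c₁, _) :: rest : List (B × Fin N)).length + 1 ≤ ((c₁, n₁) :: rest : List (B × Fin N)).length + 1
        exact le_rfl
    · exact mul_gen_mem_len F bas hbas c₁ (n₁ : ℕ) n₁.2 (ih i c')

private lemma D_mem_len (hbas : ∀ w, bas w = evalWord F w) {L : ℕ} {y : C} (hy : y ∈ spanLen bas L) :
    F.alg.D y ∈ spanLen bas L := by
  have hle : spanLen bas L ≤ Submodule.comap F.alg.D (spanLen bas L) := by
    rw [spanLen, Submodule.span_le]
    rintro _ ⟨w, hw, rfl⟩
    simp only [SetLike.mem_coe, Submodule.mem_comap]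
    rw [hbas]
    exact spanLen_mono bas (show w.body.length + 1 ≤ L from hw)
      (D_evalAux_mem F bas hbas w.body w.exp w.last)
  exact hle hy

private lemma mul_D_right (q : ℕ) (x y : C) :
    F.alg.mul q x (F.alg.D y)
      = F.alg.D (F.alg.mul q x y) + (q : K) • F.alg.mul (q-1) x y := by
  have h := F.alg.leibniz q x y
  rcases Nat.eq_zero_or_pos q with h0 | h0
  · subst h0
    rw [F.alg.D_mul_zero] at h
    simp only [Nat.cast_zero, zero_smul, add_zero]
    rw [h, zero_add]
  · rw [F.alg.D_mul q x y h0] at h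
    rw [h]
    abel

/-- Products of a generator with any normal word stay in bounded length span. -/
private lemma mul_gen_any (hbas : ∀ w, bas w = evalWord F w) (body : List (B × Fin N)) : ∀ (q : ℕ) (c c' : B) (i : ℕ),
    F.alg.mul q (F.ι c) (evalAux F body ((F.alg.D ^ i) (F.ι c')))
      ∈ spanLen bas (body.length + 2) := by
  induction body with
  | nil =>
    intro q c c' i
    induction i generalizing q with
    | zero =>
      rw [show evalAux F [] ((F.alg.D ^ 0) (F.ι c')) = F.ι c' from rfl]
      by_cases hq : q < N
      · have : F.ι c' = bas ⟨[], c', 0⟩ := by rw [hbas]; rfl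
        rw [this, bas_cons F bas hbas c q hq]
        refine Submodule.subset_span ⟨_, ?_, rfl⟩
        show ([(c, ⟨q, hq⟩)] : List (B × Fin N)).length + 1 ≤ ([] : List (B × Fin N)).length + 2
        simp
      · rw [F.loc c c' q (by omega)]
        exact Submodule.zero_mem _
    | succ i ihi =>
      have h1 : evalAux F [] ((F.alg.D ^ (i+1)) (F.ι c'))
          = F.alg.D (evalAux F [] ((F.alg.D ^ i) (F.ι c'))) := by
        show (F.alg.D ^ (i+1)) (F.ι c') = F.alg.D ((F.alg.D ^ i) (F.ι c'))
        rw [pow_succ']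
        rfl
      rw [h1, mul_D_right]
      refine Submodule.add_mem _ (D_mem_len F bas hbas (ihi q)) (Submodule.smul_mem _ _ (ihi (q-1)))
  | cons p rest ih =>
    intro q c c' i
    obtain ⟨c₁, n₁⟩ := p
    set Y := evalAux F rest ((F.alg.D ^ i) (F.ι c')) with hY
    have hstep : evalAux F ((c₁, n₁) :: rest) ((F.alg.D ^ i) (F.ι c'))
        = F.alg.mul (n₁ : ℕ) (F.ι c₁) Y := rfl
    rw [hstep, inv_assoc7 F q (n₁ : ℕ) (F.ι c) (F.ι c₁) Y]
    refine Submodule.sum_mem _ ?_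
    intro t ht
    simp only [mem_range] at ht
    refine Submodule.smul_mem _ _ ?_
    by_cases hqt : q - t < N
    · rw [F.alg.assoc (q-t) ((n₁ : ℕ)+t) (F.ι c) (F.ι c₁) Y]
      refine Submodule.sum_mem _ ?_
      intro s hs
      simp only [mem_range] at hs
      refine Submodule.smul_mem _ _ ?_
      have hout : q - t - s < N := by omega
      have hinner := ih ((n₁ : ℕ) + t + s) c₁ c' i
      have hfin := mul_gen_mem_len F bas hbas c (q-t-s) hout hinner
      refine spanLen_mono bas ?_ hfin
      simp only [List.length_cons]
      omega
    · rw [F.loc c c₁ (q-t) (by omega)]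
      simp only [map_zero, LinearMap.zero_apply]
      exact Submodule.zero_mem _

/-- Products of a `D`-free right-normed word with a normal word stay in bounded length span. -/
private lemma mul_word_any (hbas : ∀ w, bas w = evalWord F w) (l : List (B × Fin N)) : ∀ (p : ℕ) (c : B) (u : NormalWord B N),
    F.alg.mul p (evalAux F l (F.ι c)) (evalWord F u)
      ∈ spanLen bas (l.length + u.body.length + 2) := by
  induction l with
  | nil =>
    intro p c u
    have h0 : evalAux F [] (F.ι c) = F.ι c := rfl
    rw [h0]
    have hfin := mul_gen_any F bas hbas u.body p c u.last u.exp
    refine spanLen_mono bas ?_ hfin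
    simp only [List.length_nil]
    omega
  | cons p₀ rest ih =>
    intro p c u
    obtain ⟨b, k⟩ := p₀
    have hstep : evalAux F ((b, k) :: rest) (F.ι c)
        = F.alg.mul (k : ℕ) (F.ι b) (evalAux F rest (F.ι c)) := rfl
    rw [hstep, F.alg.assoc (k : ℕ) p (F.ι b) (evalAux F rest (F.ι c)) (evalWord F u)]
    refine Submodule.sum_mem _ ?_
    intro t ht
    refine Submodule.smul_mem _ _ ?_
    have hout : (k : ℕ) - t < N := by have := k.2; omega
    have hfin := mul_gen_mem_len F bas hbas b ((k : ℕ) - t) hout (ih (p+t) c u)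
    refine spanLen_mono bas ?_ hfin
    simp only [List.length_cons]
    omega

private lemma low_repr {r : B → B → Prop} {W : NormalWord B N} {g : C}
    (hg : g ∈ spanLow bas r W) : ∀ w', bas.repr g w' ≠ 0 → wtLT r w' W := by
  refine Submodule.span_induction ?_ ?_ ?_ ?_ hg
  · rintro _ ⟨w, hw, rfl⟩ w' hne
    by_cases h : w = w'
    · subst h; exact hw
    · rw [bas.repr_self, Finsupp.single_eq_of_ne (Ne.symm h)] at hne
      exact absurd rfl hne
  · intro w' hne
    simp at hne
  · intro x y _ _ hx hy w' hne
    rw [map_add, Finsupp.add_apply] at hne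
    by_cases h : bas.repr x w' = 0
    · exact hy w' (by rw [h, zero_add] at hne; exact hne)
    · exact hx w' h
  · intro a x _ hx w' hne
    rw [map_smul, Finsupp.smul_apply] at hne
    exact hx w' (fun h => hne (by rw [h, smul_zero]))

private lemma wtLT_cons_mono {r : B → B → Prop} (b : B) (k : Fin N)
    {w₂ w' : NormalWord B N} (h : wtLT r w₂ w') :
    wtLT r ⟨(b, k) :: w₂.body, w₂.last, w₂.exp⟩ ⟨(b, k) :: w'.body, w'.last, w'.exp⟩ := by
  rcases h with h | ⟨hlen, h⟩
  · exact Or.inl (by simpa using Nat.succ_lt_succ h)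
  · refine Or.inr ⟨by simpa using hlen, ?_⟩
    rcases h with h | ⟨hbody, h⟩
    · exact Or.inl (List.Lex.cons h)
    · exact Or.inr ⟨by rw [hbody], h⟩

private lemma mul_gen_low (hbas : ∀ w, bas w = evalWord F w) {r : B → B → Prop} (b : B) (k : Fin N)
    {w' : NormalWord B N} {g : C} (hg : g ∈ spanLow bas r w') :
    F.alg.mul (k : ℕ) (F.ι b) g
      ∈ spanLow bas r ⟨(b, k) :: w'.body, w'.last, w'.exp⟩ := by
  have hle : spanLow bas r w' ≤ Submodule.comap (F.alg.mul (k : ℕ) (F.ι b))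
      (spanLow bas r ⟨(b, k) :: w'.body, w'.last, w'.exp⟩) := by
    rw [spanLow, Submodule.span_le]
    rintro _ ⟨w₂, hw₂, rfl⟩
    simp only [SetLike.mem_coe, Submodule.mem_comap]
    rw [bas_cons F bas hbas b (k : ℕ) k.2 w₂]
    exact Submodule.subset_span ⟨_, wtLT_cons_mono b k hw₂, by simp⟩
  exact hle hg

private lemma mul_gen_len_low (hbas : ∀ w, bas w = evalWord F w) {r : B → B → Prop} (hirr : IsIrrefl B r) (b : B) (j : ℕ)
    (hj : j < N) (k : Fin N) (hjk : j < (k : ℕ)) {T : NormalWord B N} {L : ℕ}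
    (hL : L ≤ T.body.length + 1) {g : C} (hg : g ∈ spanLen bas L) :
    F.alg.mul j (F.ι b) g ∈ spanLow bas r ⟨(b, k) :: T.body, T.last, T.exp⟩ := by
  have hle : spanLen bas L ≤ Submodule.comap (F.alg.mul j (F.ι b))
      (spanLow bas r ⟨(b, k) :: T.body, T.last, T.exp⟩) := by
    rw [spanLen, Submodule.span_le]
    rintro _ ⟨w₂, hw₂, rfl⟩
    simp only [SetLike.mem_coe, Submodule.mem_comap]
    rw [bas_cons F bas hbas b j hj w₂]
    refine Submodule.subset_span ⟨_, ?_, rfl⟩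
    show wtLT r ⟨(b, ⟨j, hj⟩) :: w₂.body, w₂.last, w₂.exp⟩ ⟨(b, k) :: T.body, T.last, T.exp⟩
    have hlen : w₂.body.length ≤ T.body.length := by
      have h2 : w₂.body.length + 1 ≤ L := hw₂
      omega
    rcases Nat.lt_or_ge w₂.body.length T.body.length with hlt | hge
    · exact Or.inl (by simpa using Nat.succ_lt_succ hlt)
    · have heq : w₂.body.length = T.body.length := by omega
      refine Or.inr ⟨by simpa using heq, Or.inl ?_⟩
      exact List.Lex.rel (Prod.Lex.right b (show (⟨j, hj⟩ : Fin N) < k from hjk))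
  exact hle hg

/-- Main lemma: `[a]_(m)[u] = [a_(m) u] +` strictly smaller terms. -/
private lemma main_aux7 (hbas : ∀ w, bas w = evalWord F w) (r : B → B → Prop) (hirr : IsIrrefl B r) (l : List (B × Fin N)) :
    ∀ (c : B) (m : Fin N) (u : NormalWord B N),
    F.alg.mul (m : ℕ) (evalAux F l (F.ι c)) (evalWord F u)
        - bas ⟨l ++ (c, m) :: u.body, u.last, u.exp⟩
      ∈ spanLow bas r ⟨l ++ (c, m) :: u.body, u.last, u.exp⟩ := by
  induction l with
  | nil =>
    intro c m u
    have h1 : bas ⟨[] ++ (c, m) :: u.body, u.last, u.exp⟩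
        = F.alg.mul (m : ℕ) (F.ι c) (evalWord F u) := by
      rw [hbas]
      rfl
    rw [h1, show evalAux F [] (F.ι c) = F.ι c from rfl, sub_self]
    exact Submodule.zero_mem _
  | cons p l' ih =>
    intro c m u
    obtain ⟨b, k⟩ := p
    set w' : NormalWord B N := ⟨l' ++ (c, m) :: u.body, u.last, u.exp⟩ with hw'
    have hWeq : (⟨((b,k) :: l') ++ (c, m) :: u.body, u.last, u.exp⟩ : NormalWord B N)
        = ⟨(b, k) :: w'.body, w'.last, w'.exp⟩ := rfl
    rw [hWeq]
    have hstep : evalAux F ((b, k) :: l') (F.ι c)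
        = F.alg.mul (k : ℕ) (F.ι b) (evalAux F l' (F.ι c)) := rfl
    rw [hstep, F.alg.assoc (k : ℕ) (m : ℕ) (F.ι b) (evalAux F l' (F.ι c)) (evalWord F u),
      Finset.sum_range_succ']
    have hzero : ((-1 : K) ^ 0 * ((k : ℕ).choose 0 : K)) •
        F.alg.mul ((k : ℕ) - 0) (F.ι b)
          (F.alg.mul ((m : ℕ) + 0) (evalAux F l' (F.ι c)) (evalWord F u))
        = F.alg.mul (k : ℕ) (F.ι b)
            (F.alg.mul (m : ℕ) (evalAux F l' (F.ι c)) (evalWord F u)) := by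
      simp
    rw [hzero]
    have hsplit : (∑ t ∈ range (k : ℕ), ((-1 : K) ^ (t+1) * ((k : ℕ).choose (t+1) : K)) •
          F.alg.mul ((k : ℕ) - (t+1)) (F.ι b)
            (F.alg.mul ((m : ℕ) + (t+1)) (evalAux F l' (F.ι c)) (evalWord F u)))
        + F.alg.mul (k : ℕ) (F.ι b)
            (F.alg.mul (m : ℕ) (evalAux F l' (F.ι c)) (evalWord F u))
        - bas ⟨(b, k) :: w'.body, w'.last, w'.exp⟩
        = (∑ t ∈ range (k : ℕ), ((-1 : K) ^ (t+1) * ((k : ℕ).choose (t+1) : K)) •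
          F.alg.mul ((k : ℕ) - (t+1)) (F.ι b)
            (F.alg.mul ((m : ℕ) + (t+1)) (evalAux F l' (F.ι c)) (evalWord F u)))
        + (F.alg.mul (k : ℕ) (F.ι b)
            (F.alg.mul (m : ℕ) (evalAux F l' (F.ι c)) (evalWord F u))
          - bas ⟨(b, k) :: w'.body, w'.last, w'.exp⟩) := by
      abel
    rw [hsplit]
    refine Submodule.add_mem _ ?_ ?_
    · refine Submodule.sum_mem _ ?_
      intro t ht
      simp only [mem_range] at ht
      refine Submodule.smul_mem _ _ ?_
      have hk := k.2
      have hlen2 : l'.length + u.body.length + 2 ≤ w'.body.length + 1 := by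
        have : w'.body.length = l'.length + (u.body.length + 1) := by
          simp [hw']
        omega
      exact mul_gen_len_low F bas hbas hirr b ((k : ℕ) - (t+1)) (by omega) k (by omega)
        (T := w') (L := l'.length + u.body.length + 2) hlen2
        (mul_word_any F bas hbas l' ((m : ℕ) + (t+1)) c u)
    · have hcons : F.alg.mul (k : ℕ) (F.ι b) (bas w')
          = bas ⟨(b, k) :: w'.body, w'.last, w'.exp⟩ := by
        rw [hbas, hbas]
        rfl
      have hrw : F.alg.mul (k : ℕ) (F.ι b)
            (F.alg.mul (m : ℕ) (evalAux F l' (F.ι c)) (evalWord F u))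
          - bas ⟨(b, k) :: w'.body, w'.last, w'.exp⟩
          = F.alg.mul (k : ℕ) (F.ι b)
              (F.alg.mul (m : ℕ) (evalAux F l' (F.ι c)) (evalWord F u) - bas w') := by
        rw [map_sub, hcons]
      rw [hrw]
      exact mul_gen_low F bas hbas b k (ih c m u)

private lemma lex_irrefl {α : Type*} {R : α → α → Prop} (hR : IsIrrefl α R) :
    ∀ l : List α, ¬ List.Lex R l l := by
  intro l h
  induction l with
  | nil => cases h
  | cons a t iht =>
    cases h with
    | cons h => exact iht h
    | rel h => exact hR.irrefl a h

private lemma wtLT_irrefl {r : B → B → Prop} (hirr : IsIrrefl B r) (W : NormalWord B N) :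
    ¬ wtLT r W W := by
  intro h
  rcases h with h | ⟨_, h⟩
  · omega
  · rcases h with h | ⟨_, h⟩
    · have : IsIrrefl (B × Fin N) (Prod.Lex r (· < ·)) := by
        haveI := hirr
        exact ⟨fun x hx => by
          cases hx with
          | left _ _ h => exact hirr.irrefl _ h
          | right _ h => exact lt_irrefl _ h⟩
      exact lex_irrefl this W.body h
    · rcases h with h | ⟨_, h⟩
      · exact hirr.irrefl _ h
      · omega

private lemma lex_append {α : Type*} {R : α → α → Prop} (p : List α) {l₁ l₂ : List α}
    (h : List.Lex R l₁ l₂) : List.Lex R (p ++ l₁) (p ++ l₂) := by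
  induction p with
  | nil => exact h
  | cons a t iht => exact List.Lex.cons iht

end Aux7

theorem lead_mul_Dfree_left {K : Type u} [Field K] [CharZero K]
    {B : Type v} {N : ℕ} {C : Type w} [AddCommGroup C] [Module K C]
    (F : FreeAssocConformal K B N C) (bas : Module.Basis (NormalWord B N) K C)
    (hbas : ∀ w, bas w = evalWord F w)
    (r : B → B → Prop) (hr : IsWellOrder B r)
    (a u v : NormalWord B N) (ha : a.exp = 0) (n : Fin N) :
    IsLead bas r (F.alg.mul (n : ℕ) (evalWord F a) (evalWord F u)) (a.concat n u) ∧
    (wtLT r v u → wtLT r (a.concat n v) (a.concat n u)) := by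
  have hbas' : ∀ w, bas w = evalWord F w := hbas
  haveI := hr
  have hirr : IsIrrefl B r := inferInstance
  constructor
  · -- leading word
    have ha' : evalWord F a = evalAux F a.body (F.ι a.last) := by
      unfold evalWord
      rw [ha]
      simp
    have hW : a.concat n u = ⟨a.body ++ (a.last, n) :: u.body, u.last, u.exp⟩ := rfl
    set W : NormalWord B N := ⟨a.body ++ (a.last, n) :: u.body, u.last, u.exp⟩ with hWdef
    set L : C := F.alg.mul (n : ℕ) (evalWord F a) (evalWord F u) with hL
    have hmem : L - bas W ∈ spanLow bas r W := by
      rw [hL, ha']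
      exact main_aux7 F bas hbas' r hirr a.body a.last n u
    have hlow := low_repr bas hmem
    have hreprW : bas.repr L W = 1 := by
      have : L = bas W + (L - bas W) := by abel
      rw [this, map_add, Finsupp.add_apply, bas.repr_self, Finsupp.single_eq_same]
      have h0 : bas.repr (L - bas W) W = 0 := by
        by_contra hne
        exact wtLT_irrefl hirr W (hlow W hne)
      rw [h0, add_zero]
    rw [hW]
    constructor
    · rw [hreprW]
      exact one_ne_zero
    · intro w' hne
      by_cases h : w' = W
      · exact Or.inl h
      · right
        have : L = bas W + (L - bas W) := by abel
        rw [this, map_add, Finsupp.add_apply, bas.repr_self,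
          Finsupp.single_eq_of_ne h, zero_add] at hne
        exact hlow w' hne
  · -- monotonicity
    intro h
    have hlena : ∀ x : NormalWord B N,
        (a.concat n x).body.length = a.body.length + 1 + x.body.length := by
      intro x
      simp [NormalWord.concat]
      omega
    rcases h with hlt | ⟨hlen, h⟩
    · left
      rw [hlena, hlena]
      omega
    · right
      refine ⟨by rw [hlena, hlena, hlen], ?_⟩
      rcases h with hlex | ⟨hbody, h⟩
      · left
        show List.Lex _ (a.body ++ (a.last, n) :: v.body) (a.body ++ (a.last, n) :: u.body)
        exact lex_append a.body (List.Lex.cons hlex)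
      · right
        refine ⟨?_, h⟩
        show a.body ++ (a.last, n) :: v.body = a.body ++ (a.last, n) :: u.body
        rw [hbody]
end

section
/- In the free associative conformal algebra C(B, N), for any u ∈ T and any i ∈ ℤ_{≥0}, the leading word of D^i([u]) equals u D^i (the word u with its final D-exponent increased by i); and if u > v in T, then the leading word of D^i([u]) is strictly greater than the leading word of D^i([v]). -/
/-!  Basic definitions for (associative) conformal algebras, the free
associative conformal algebra `C(B,N)`, normal words, the weight ordering,
normal `S`-words, compositions and Gröbner–Shirshov bases, following
Ni–Chen, "A new Composition-Diamond lemma for associative conformal algebras". -/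

universe u v w

open scoped BigOperators

variable {K : Type u} [Field K] {C : Type w} [AddCommGroup C] [Module K C]

variable {B : Type v} {N : ℕ}

/-! ### Auxiliary lemmas for Statement 8 -/

namespace LeadDPowAux

variable {K : Type u} [Field K] {B : Type v} {N : ℕ} {C : Type w}
  [AddCommGroup C] [Module K C]

lemma prodLexTrans {r : B → B → Prop} (hr : ∀ a b c : B, r a b → r b c → r a c) :
    ∀ {x y z : B × Fin N}, Prod.Lex r (· < ·) x y → Prod.Lex r (· < ·) y z →
      Prod.Lex r (· < ·) x z := by
  intro x y z h1 h2
  cases h1 with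
  | left b1 b2 h =>
    cases h2 with
    | left _ _ h' => exact Prod.Lex.left _ _ (hr _ _ _ h h')
    | right _ h' => exact Prod.Lex.left _ _ h
  | right a h =>
    cases h2 with
    | left _ _ h' => exact Prod.Lex.left _ _ h'
    | right _ h' => exact Prod.Lex.right _ (lt_trans h h')

lemma prodLexIrrefl {r : B → B → Prop} (hr : ∀ a : B, ¬ r a a)
    (x : B × Fin N) : ¬ Prod.Lex r (· < ·) x x := by
  intro h
  cases h with
  | left _ _ h => exact hr _ h
  | right _ h => exact lt_irrefl _ h

lemma lexTrans {α : Type*} {s : α → α → Prop}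
    (hs : ∀ a b c : α, s a b → s b c → s a c) :
    ∀ {l1 l2 l3 : List α}, List.Lex s l1 l2 → List.Lex s l2 l3 → List.Lex s l1 l3 := by
  intro l1 l2 l3 h1 h2
  induction h2 generalizing l1 with
  | nil => cases h1
  | cons h ih =>
    cases h1 with
    | nil => exact List.Lex.nil
    | cons h' => exact List.Lex.cons (ih h')
    | rel h' => exact List.Lex.rel h'
  | rel h =>
    cases h1 with
    | nil => exact List.Lex.nil
    | cons h' => exact List.Lex.rel h
    | rel h' => exact List.Lex.rel (hs _ _ _ h' h)

lemma lexIrrefl {α : Type*} {s : α → α → Prop} (hs : ∀ a : α, ¬ s a a) :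
    ∀ l : List α, ¬ List.Lex s l l := by
  intro l
  induction l with
  | nil => exact fun h => by cases h
  | cons a t ih =>
    intro h
    cases h with
    | cons h => exact ih h
    | rel h => exact hs _ h

lemma wtLT_trans {r : B → B → Prop} (hr : ∀ a b c : B, r a b → r b c → r a c)
    {w1 w2 w3 : NormalWord B N} (h1 : wtLT r w1 w2) (h2 : wtLT r w2 w3) :
    wtLT r w1 w3 := by
  rcases h1 with h1 | ⟨e1, h1⟩
  · rcases h2 with h2 | ⟨e2, h2⟩
    · exact Or.inl (lt_trans h1 h2)
    · exact Or.inl (by omega)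
  · rcases h2 with h2 | ⟨e2, h2⟩
    · exact Or.inl (by omega)
    · refine Or.inr ⟨e1.trans e2, ?_⟩
      rcases h1 with h1 | ⟨b1, h1⟩
      · rcases h2 with h2 | ⟨b2, h2⟩
        · exact Or.inl (lexTrans (s := Prod.Lex r (· < ·))
            (fun _ _ _ hab hbc => prodLexTrans hr hab hbc) h1 h2)
        · exact Or.inl (b2 ▸ h1)
      · rcases h2 with h2 | ⟨b2, h2⟩
        · exact Or.inl (by rw [b1]; exact h2)
        · refine Or.inr ⟨b1.trans b2, ?_⟩
          rcases h1 with h1 | ⟨l1, h1⟩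
          · rcases h2 with h2 | ⟨l2, h2⟩
            · exact Or.inl (hr _ _ _ h1 h2)
            · exact Or.inl (l2 ▸ h1)
          · rcases h2 with h2 | ⟨l2, h2⟩
            · exact Or.inl (by rw [l1]; exact h2)
            · exact Or.inr ⟨l1.trans l2, lt_trans h1 h2⟩

lemma wtLT_irrefl {r : B → B → Prop} (hirr : ∀ a : B, ¬ r a a) (w : NormalWord B N) :
    ¬ wtLT r w w := by
  rintro (h | ⟨-, h | ⟨-, h | ⟨-, h⟩⟩⟩)
  · exact lt_irrefl _ h
  · exact lexIrrefl (fun x => prodLexIrrefl hirr x) _ h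
  · exact hirr _ h
  · exact lt_irrefl _ h

lemma wtLT_shiftD {r : B → B → Prop} {v u : NormalWord B N} (i : ℕ) (h : wtLT r v u) :
    wtLT r (v.shiftD i) (u.shiftD i) := by
  rcases h with h | ⟨e, h | ⟨b, h | ⟨l, h⟩⟩⟩
  · exact Or.inl h
  · exact Or.inr ⟨e, Or.inl h⟩
  · exact Or.inr ⟨e, Or.inr ⟨b, Or.inl h⟩⟩
  · exact Or.inr ⟨e, Or.inr ⟨b, Or.inr ⟨l, Nat.add_lt_add_right h i⟩⟩⟩

lemma wtLT_cons {r : B → B → Prop} (a : B × Fin N) {v u : NormalWord B N} (h : wtLT r v u) :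
    wtLT r ⟨a :: v.body, v.last, v.exp⟩ ⟨a :: u.body, u.last, u.exp⟩ := by
  rcases h with h | ⟨e, h | ⟨b, h | ⟨l, h⟩⟩⟩
  · exact Or.inl (by simpa using h)
  · exact Or.inr ⟨by simpa using e, Or.inl (List.Lex.cons h)⟩
  · exact Or.inr ⟨by simpa using e, Or.inr ⟨by rw [b], Or.inl h⟩⟩
  · exact Or.inr ⟨by simpa using e, Or.inr ⟨by rw [b], Or.inr ⟨l, h⟩⟩⟩

/-- The submodule spanned by basis words strictly below `w`. -/
def Low (bas : Module.Basis (NormalWord B N) K C) (r : B → B → Prop) (w : NormalWord B N) :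
    Submodule K C :=
  Submodule.span K (⇑bas '' {w' | wtLT r w' w})

lemma bas_mem_Low {bas : Module.Basis (NormalWord B N) K C} {r : B → B → Prop}
    {w' w : NormalWord B N} (h : wtLT r w' w) : bas w' ∈ Low bas r w :=
  Submodule.subset_span ⟨w', h, rfl⟩

lemma Low_mono {bas : Module.Basis (NormalWord B N) K C} {r : B → B → Prop}
    (hr : ∀ a b c : B, r a b → r b c → r a c) {w1 w2 : NormalWord B N}
    (h : wtLT r w1 w2) : Low bas r w1 ≤ Low bas r w2 :=
  Submodule.span_mono (Set.image_mono fun _ hw' => wtLT_trans hr hw' h)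

lemma repr_eq_zero_of_mem_Low {bas : Module.Basis (NormalWord B N) K C} {r : B → B → Prop}
    {w : NormalWord B N} {g : C} (hg : g ∈ Low bas r w) (w' : NormalWord B N)
    (hw' : ¬ wtLT r w' w) : bas.repr g w' = 0 := by
  induction hg using Submodule.span_induction with
  | mem x hx =>
    obtain ⟨w'', hw'', rfl⟩ := hx
    rw [bas.repr_self]
    by_cases h : w'' = w'
    · exact absurd (h ▸ hw'') hw'
    · exact Finsupp.single_eq_of_ne (Ne.symm h)
  | zero => simp
  | add x y hx hy ihx ihy => simp [ihx, ihy]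
  | smul a x hx ih => simp [ih]

lemma mul_mem_Low (F : FreeAssocConformal K B N C) (bas : Module.Basis (NormalWord B N) K C)
    (hbas : ∀ w, bas w = evalWord F w) (r : B → B → Prop) (a : B) (n : Fin N)
    {w : NormalWord B N} {g : C} (hg : g ∈ Low bas r w) :
    F.alg.mul (n : ℕ) (F.ι a) g ∈ Low bas r ⟨(a, n) :: w.body, w.last, w.exp⟩ := by
  induction hg using Submodule.span_induction with
  | mem x hx =>
    obtain ⟨w', hw', rfl⟩ := hx
    have h : F.alg.mul (n : ℕ) (F.ι a) (bas w')
        = bas ⟨(a, n) :: w'.body, w'.last, w'.exp⟩ := by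
      rw [hbas, hbas]; rfl
    rw [h]
    exact bas_mem_Low (wtLT_cons _ hw')
  | zero => rw [map_zero]; exact zero_mem _
  | add x y hx hy ihx ihy => rw [map_add]; exact add_mem ihx ihy
  | smul c x hx ihx => rw [map_smul]; exact Submodule.smul_mem _ _ ihx

set_option maxHeartbeats 1000000 in
lemma D_evalWord (F : FreeAssocConformal K B N C) (bas : Module.Basis (NormalWord B N) K C)
    (hbas : ∀ w, bas w = evalWord F w) (r : B → B → Prop) :
    ∀ (p : List (B × Fin N)) (b : B) (e : ℕ),
      F.alg.D (evalWord F ⟨p, b, e⟩) - evalWord F ⟨p, b, e + 1⟩ ∈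
        Low bas r ⟨p, b, e + 1⟩ := by
  intro p
  induction p with
  | nil =>
    intro b e
    have h : F.alg.D (evalWord F ⟨[], b, e⟩) = evalWord F ⟨[], b, e + 1⟩ := by
      show F.alg.D ((F.alg.D ^ e) (F.ι b)) = (F.alg.D ^ (e + 1)) (F.ι b)
      rw [pow_succ', Module.End.mul_apply]
    rw [h, sub_self]
    exact zero_mem _
  | cons an p ih =>
    intro b e
    obtain ⟨a, n⟩ := an
    have h2 : F.alg.mul (n : ℕ) (F.ι a)
          (F.alg.D (evalWord F ⟨p, b, e⟩) - evalWord F ⟨p, b, e + 1⟩)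
        ∈ Low bas r ⟨(a, n) :: p, b, e + 1⟩ :=
      mul_mem_Low F bas hbas r a n (w := ⟨p, b, e + 1⟩) (ih b e)
    have h1 : F.alg.mul (n : ℕ) (F.alg.D (F.ι a)) (evalWord F ⟨p, b, e⟩)
        ∈ Low bas r ⟨(a, n) :: p, b, e + 1⟩ := by
      rcases Nat.eq_zero_or_pos (n : ℕ) with hn | hn
      · rw [hn, F.alg.D_mul_zero]
        exact zero_mem _
      · rw [F.alg.D_mul _ _ _ hn]
        refine neg_mem (Submodule.smul_mem _ _ ?_)
        have hn1 : (n : ℕ) - 1 < N := lt_of_le_of_lt (Nat.sub_le _ _) n.isLt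
        have hw : F.alg.mul ((n : ℕ) - 1) (F.ι a) (evalWord F ⟨p, b, e⟩)
            = bas ⟨(a, ⟨(n : ℕ) - 1, hn1⟩) :: p, b, e⟩ := by
          rw [hbas]; rfl
        rw [hw]
        refine bas_mem_Low (Or.inr ⟨rfl, Or.inl (List.Lex.rel ?_)⟩)
        exact Prod.Lex.right a (by simpa [Fin.lt_def] using Nat.sub_lt hn one_pos)
    have key : F.alg.D (evalWord F ⟨(a, n) :: p, b, e⟩)
        - evalWord F ⟨(a, n) :: p, b, e + 1⟩
        = F.alg.mul (n : ℕ) (F.alg.D (F.ι a)) (evalWord F ⟨p, b, e⟩)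
          + F.alg.mul (n : ℕ) (F.ι a)
              (F.alg.D (evalWord F ⟨p, b, e⟩) - evalWord F ⟨p, b, e + 1⟩) := by
      have hX : evalWord F ⟨(a, n) :: p, b, e⟩
          = F.alg.mul (n : ℕ) (F.ι a) (evalWord F ⟨p, b, e⟩) := rfl
      have hX' : evalWord F ⟨(a, n) :: p, b, e + 1⟩
          = F.alg.mul (n : ℕ) (F.ι a) (evalWord F ⟨p, b, e + 1⟩) := rfl
      rw [hX, hX', F.alg.leibniz, map_sub]
      abel
    rw [key]
    exact add_mem h1 h2

set_option maxHeartbeats 1000000 in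
lemma D_mem_Low (F : FreeAssocConformal K B N C) (bas : Module.Basis (NormalWord B N) K C)
    (hbas : ∀ w, bas w = evalWord F w) (r : B → B → Prop)
    (hrt : ∀ a b c : B, r a b → r b c → r a c) {w : NormalWord B N} {g : C}
    (hg : g ∈ Low bas r w) : F.alg.D g ∈ Low bas r (w.shiftD 1) := by
  induction hg using Submodule.span_induction with
  | mem x hx =>
    obtain ⟨w', hw', rfl⟩ := hx
    have h1 : F.alg.D (bas w') - bas (w'.shiftD 1) ∈ Low bas r (w'.shiftD 1) := by
      rw [hbas, hbas]
      exact D_evalWord F bas hbas r w'.body w'.last w'.exp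
    have h2 : wtLT r (w'.shiftD 1) (w.shiftD 1) := wtLT_shiftD 1 hw'
    have h3 := add_mem (Low_mono hrt h2 h1) (bas_mem_Low (bas := bas) h2)
    simpa using h3
  | zero => rw [map_zero]; exact zero_mem _
  | add x y hx hy ihx ihy => rw [map_add]; exact add_mem ihx ihy
  | smul c x hx ihx => rw [map_smul]; exact Submodule.smul_mem _ _ ihx

lemma D_pow_evalWord (F : FreeAssocConformal K B N C) (bas : Module.Basis (NormalWord B N) K C)
    (hbas : ∀ w, bas w = evalWord F w) (r : B → B → Prop)
    (hrt : ∀ a b c : B, r a b → r b c → r a c) (u : NormalWord B N) (i : ℕ) :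
    (F.alg.D ^ i) (evalWord F u) - evalWord F (u.shiftD i) ∈ Low bas r (u.shiftD i) := by
  induction i with
  | zero =>
    have h : u.shiftD 0 = u := rfl
    rw [h, pow_zero, Module.End.one_apply, sub_self]
    exact zero_mem _
  | succ i ih =>
    have hstep : F.alg.D (evalWord F (u.shiftD i)) - evalWord F (u.shiftD (i + 1))
        ∈ Low bas r (u.shiftD (i + 1)) :=
      D_evalWord F bas hbas r u.body u.last (u.exp + i)
    have hD : F.alg.D ((F.alg.D ^ i) (evalWord F u) - evalWord F (u.shiftD i))
        ∈ Low bas r (u.shiftD (i + 1)) :=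
      D_mem_Low F bas hbas r hrt (w := u.shiftD i) ih
    have hpow : (F.alg.D ^ (i + 1)) (evalWord F u)
        = F.alg.D ((F.alg.D ^ i) (evalWord F u)) := by
      rw [pow_succ', Module.End.mul_apply]
    have hcalc : (F.alg.D ^ (i + 1)) (evalWord F u) - evalWord F (u.shiftD (i + 1))
        = F.alg.D ((F.alg.D ^ i) (evalWord F u) - evalWord F (u.shiftD i))
          + (F.alg.D (evalWord F (u.shiftD i)) - evalWord F (u.shiftD (i + 1))) := by
      rw [hpow, map_sub]
      abel
    rw [hcalc]
    exact add_mem hD hstep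

end LeadDPowAux

theorem lead_D_pow {K : Type u} [Field K] [CharZero K]
    {B : Type v} {N : ℕ} {C : Type w} [AddCommGroup C] [Module K C]
    (F : FreeAssocConformal K B N C) (bas : Module.Basis (NormalWord B N) K C)
    (hbas : ∀ w, bas w = evalWord F w)
    (r : B → B → Prop) (hr : IsWellOrder B r)
    (u v : NormalWord B N) (i : ℕ) :
    IsLead bas r ((F.alg.D ^ i) (evalWord F u)) (u.shiftD i) ∧
    (wtLT r v u → wtLT r (v.shiftD i) (u.shiftD i)) := by
  haveI : IsWellOrder B r := hr
  have hrt : ∀ a b c : B, r a b → r b c → r a c := fun _ _ _ h1 h2 => _root_.trans h1 h2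
  have hirr : ∀ a : B, ¬ r a a := fun a => irrefl a
  refine ⟨?_, fun h => LeadDPowAux.wtLT_shiftD i h⟩
  set w := u.shiftD i with hwdef
  have hmem := LeadDPowAux.D_pow_evalWord F bas hbas r hrt u i
  obtain ⟨g, hgmem, hf⟩ :
      ∃ g, g ∈ LeadDPowAux.Low bas r w ∧ (F.alg.D ^ i) (evalWord F u) = bas w + g :=
    ⟨_, hmem, by rw [hbas]; abel⟩
  constructor
  · rw [hf, map_add, Finsupp.add_apply, bas.repr_self, Finsupp.single_eq_same,
      LeadDPowAux.repr_eq_zero_of_mem_Low hgmem w (LeadDPowAux.wtLT_irrefl hirr w)]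
    simp
  · intro w' hw'
    by_cases h : w' = w
    · exact Or.inl h
    · right
      by_contra hlt
      apply hw'
      rw [hf, map_add, Finsupp.add_apply, bas.repr_self, Finsupp.single_eq_of_ne h,
        LeadDPowAux.repr_eq_zero_of_mem_Low hgmem w' hlt, add_zero]
end

section
/- The lexicographic weight ordering on normal words of the free associative conformal algebra is not compatible with the multiplications: in C({a}, N = 1), one has a_{(0)} Da > a_{(0)} a, yet (a_{(0)} Da)_{(0)} a = 0 while (a_{(0)} a)_{(0)} a = a_{(0)}(a_{(0)} a) ≠ 0. -/
/-!  Basic definitions for (associative) conformal algebras, the free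
associative conformal algebra `C(B,N)`, normal words, the weight ordering,
normal `S`-words, compositions and Gröbner–Shirshov bases, following
Ni–Chen, "A new Composition-Diamond lemma for associative conformal algebras". -/

universe u v w

open scoped BigOperators

variable {K : Type u} [Field K] {C : Type w} [AddCommGroup C] [Module K C]

variable {B : Type v} {N : ℕ}

theorem ordering_not_compatible {K : Type u} [Field K] [CharZero K]
    {C : Type w} [AddCommGroup C] [Module K C]
    (F : FreeAssocConformal K Unit 1 C) (bas : Module.Basis (NormalWord Unit 1) K C)
    (hbas : ∀ w, bas w = evalWord F w) :
    wtLT (fun _ _ : Unit => False)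
      (⟨[((), 0)], (), 0⟩ : NormalWord Unit 1) (⟨[((), 0)], (), 1⟩ : NormalWord Unit 1) ∧
    F.alg.mul 0 (F.alg.mul 0 (F.ι ()) (F.alg.D (F.ι ()))) (F.ι ()) = 0 ∧
    F.alg.mul 0 (F.alg.mul 0 (F.ι ()) (F.ι ())) (F.ι ())
      = F.alg.mul 0 (F.ι ()) (F.alg.mul 0 (F.ι ()) (F.ι ())) ∧
    F.alg.mul 0 (F.ι ()) (F.alg.mul 0 (F.ι ()) (F.ι ())) ≠ 0 := by
  refine ⟨?_, ?_, ?_, ?_⟩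
  · right
    exact ⟨rfl, Or.inr ⟨rfl, Or.inr ⟨rfl, Nat.zero_lt_one⟩⟩⟩
  · have h := F.alg.assoc 0 0 (F.ι ()) (F.alg.D (F.ι ())) (F.ι ())
    simp only [zero_add, Finset.sum_range_one, pow_zero, Nat.choose_self, Nat.cast_one,
      one_mul, one_smul, Nat.sub_zero] at h
    rw [h, F.alg.D_mul_zero, LinearMap.map_zero]
  · have h := F.alg.assoc 0 0 (F.ι ()) (F.ι ()) (F.ι ())
    simpa only [zero_add, Finset.sum_range_one, pow_zero, Nat.choose_self, Nat.cast_one,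
      one_mul, one_smul, Nat.sub_zero] using h
  · have hw : evalWord F (⟨[((), 0), ((), 0)], (), 0⟩ : NormalWord Unit 1)
        = F.alg.mul 0 (F.ι ()) (F.alg.mul 0 (F.ι ()) (F.ι ())) := by
      simp [evalWord, evalAux]
    rw [← hw, ← hbas]
    exact bas.ne_zero _
end

section
/- In the free associative conformal algebra C(B, N), for any normal words [u], [v] (u, v ∈ T) and any n ∈ ℤ_{≥0}, the leading word of [u]_{(n)}[v] is at most u^{\D} ♮ v, where u^{\D} is u with its final D-exponent removed and u^{\D} ♮ v denotes the normal word obtained by concatenating u^{\D} and v with all connecting indices equal to N − 1. -/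
/-!  Basic definitions for (associative) conformal algebras, the free
associative conformal algebra `C(B,N)`, normal words, the weight ordering,
normal `S`-words, compositions and Gröbner–Shirshov bases, following
Ni–Chen, "A new Composition-Diamond lemma for associative conformal algebras". -/

universe u v w

open scoped BigOperators

variable {K : Type u} [Field K] {C : Type w} [AddCommGroup C] [Module K C]

variable {B : Type v} {N : ℕ}

/-! ### Auxiliary development for Statement 10 -/

namespace GSAux

/-- Transitivity of `List.Lex`, assuming transitivity of the base relation. -/
theorem lexTrans {α : Type*} {R : α → α → Prop}
    (hR : ∀ x y z : α, R x y → R y z → R x z) :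
    ∀ {l₁ l₂ l₃ : List α}, List.Lex R l₁ l₂ → List.Lex R l₂ l₃ → List.Lex R l₁ l₃ := by
  intro l₁ l₂ l₃ h₁
  induction h₁ generalizing l₃ with
  | nil => intro h₂; cases h₂ <;> exact List.Lex.nil
  | cons h ih =>
    intro h₂
    cases h₂ with
    | cons h' => exact List.Lex.cons (ih h')
    | rel h' => exact List.Lex.rel h'
  | rel h =>
    intro h₂
    cases h₂ with
    | cons h' => exact List.Lex.rel h
    | rel h' => exact List.Lex.rel (hR _ _ _ h h')

section Order

variable {B : Type v} {N : ℕ} {r : B → B → Prop}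

theorem prodLexTrans [IsTrans B r] {x y z : B × Fin N}
    (h₁ : Prod.Lex r (· < ·) x y) (h₂ : Prod.Lex r (· < ·) y z) :
    Prod.Lex r (· < ·) x z :=
  Prod.Lex.trans h₁ h₂

theorem wtLT_trans [IsTrans B r] {a b c : NormalWord B N}
    (h₁ : wtLT r a b) (h₂ : wtLT r b c) : wtLT r a c := by
  rcases h₁ with h₁ | ⟨e₁, h₁⟩
  · rcases h₂ with h₂ | ⟨e₂, h₂⟩
    · exact Or.inl (h₁.trans h₂)
    · exact Or.inl (lt_of_lt_of_le h₁ (le_of_eq e₂))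
  · rcases h₂ with h₂ | ⟨e₂, h₂⟩
    · exact Or.inl (lt_of_le_of_lt (le_of_eq e₁) h₂)
    · refine Or.inr ⟨e₁.trans e₂, ?_⟩
      rcases h₁ with h₁ | ⟨hb₁, h₁⟩
      · rcases h₂ with h₂ | ⟨hb₂, h₂⟩
        · exact Or.inl (lexTrans (R := Prod.Lex r (· < ·)) (fun _ _ _ hx hy => prodLexTrans hx hy) h₁ h₂)
        · exact Or.inl (hb₂ ▸ h₁)
      · rcases h₂ with h₂ | ⟨hb₂, h₂⟩
        · exact Or.inl (by rw [hb₁]; exact h₂)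
        · refine Or.inr ⟨hb₁.trans hb₂, ?_⟩
          rcases h₁ with h₁ | ⟨hl₁, h₁⟩
          · rcases h₂ with h₂ | ⟨hl₂, h₂⟩
            · exact Or.inl (Trans.trans h₁ h₂)
            · exact Or.inl (hl₂ ▸ h₁)
          · rcases h₂ with h₂ | ⟨hl₂, h₂⟩
            · exact Or.inl (by rw [hl₁]; exact h₂)
            · exact Or.inr ⟨hl₁.trans hl₂, h₁.trans h₂⟩

theorem wtLE_trans [IsTrans B r] {a b c : NormalWord B N}
    (h₁ : wtLE r a b) (h₂ : wtLE r b c) : wtLE r a c := by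
  rcases h₁ with h₁ | rfl
  · rcases h₂ with h₂ | rfl
    · exact Or.inl (wtLT_trans h₁ h₂)
    · exact Or.inl h₁
  · exact h₂

theorem wtLE_refl {a : NormalWord B N} : wtLE r a a := Or.inr rfl

theorem wtLE_cons {c : B} {m m' : Fin N} (hm : m ≤ m') {w W : NormalWord B N}
    (h : wtLE r w W) :
    wtLE r ⟨(c, m) :: w.body, w.last, w.exp⟩ ⟨(c, m') :: W.body, W.last, W.exp⟩ := by
  rcases h with h | rfl
  · rcases h with hl | ⟨hl, h⟩
    · exact Or.inl (Or.inl (by simpa using Nat.succ_lt_succ hl))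
    · refine Or.inl (Or.inr ⟨by simp [hl], ?_⟩)
      rcases lt_or_eq_of_le hm with hm' | rfl
      · exact Or.inl (List.Lex.rel (Prod.Lex.right c hm'))
      · rcases h with hlex | ⟨hb, hrest⟩
        · exact Or.inl (List.Lex.cons hlex)
        · exact Or.inr ⟨by rw [hb], hrest⟩
  · rcases lt_or_eq_of_le hm with hm' | rfl
    · exact Or.inl (Or.inr ⟨rfl, Or.inl (List.Lex.rel (Prod.Lex.right c hm'))⟩)
    · exact Or.inr rfl

theorem wtLE_bump {w W : NormalWord B N} (h : wtLE r w W) :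
    wtLE r ⟨w.body, w.last, w.exp + 1⟩ ⟨W.body, W.last, W.exp + 1⟩ := by
  rcases h with h | rfl
  · rcases h with hl | ⟨hl, hlex | ⟨hb, hr | ⟨hlast, he⟩⟩⟩
    · exact Or.inl (Or.inl hl)
    · exact Or.inl (Or.inr ⟨hl, Or.inl hlex⟩)
    · exact Or.inl (Or.inr ⟨hl, Or.inr ⟨hb, Or.inl hr⟩⟩)
    · exact Or.inl (Or.inr ⟨hl, Or.inr ⟨hb, Or.inr ⟨hlast, Nat.succ_lt_succ he⟩⟩⟩)
  · exact Or.inr rfl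

theorem wtLE_expLe {bdy : List (B × Fin N)} {l : B} {e e' : ℕ} (h : e ≤ e') :
    wtLE r (⟨bdy, l, e⟩ : NormalWord B N) ⟨bdy, l, e'⟩ := by
  rcases lt_or_eq_of_le h with h' | rfl
  · exact Or.inl (Or.inr ⟨rfl, Or.inr ⟨rfl, Or.inr ⟨rfl, h'⟩⟩⟩)
  · exact Or.inr rfl

/-- The top index `N - 1`. -/
def topF (hN : 0 < N) : Fin N := ⟨N - 1, Nat.sub_lt hN one_pos⟩

theorem le_topF (hN : 0 < N) (m : Fin N) : m ≤ topF hN := by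
  rw [Fin.le_def]
  exact Nat.le_pred_of_lt m.2

theorem lex_mapTop (hN : 0 < N) (r : B → B → Prop) :
    ∀ l : List (B × Fin N),
      l = l.map (fun p => (p.1, topF hN)) ∨
        List.Lex (Prod.Lex r (· < ·)) l (l.map (fun p => (p.1, topF hN))) := by
  intro l
  induction l with
  | nil => exact Or.inl rfl
  | cons hd t ih =>
    obtain ⟨c, p⟩ := hd
    rcases lt_or_eq_of_le (le_topF hN p) with hp | rfl
    · exact Or.inr (List.Lex.rel (Prod.Lex.right c hp))
    · rcases ih with ih | ih
      · exact Or.inl (by simp only [List.map_cons]; rw [← ih])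
      · exact Or.inr (by simpa only [List.map_cons] using List.Lex.cons ih)

theorem wtLE_mapTop (hN : 0 < N) {bdy : List (B × Fin N)} {l : B} {e : ℕ} :
    wtLE r (⟨bdy, l, e⟩ : NormalWord B N)
      ⟨bdy.map (fun p => (p.1, topF hN)), l, e⟩ := by
  rcases lex_mapTop hN r bdy with h | h
  · exact Or.inr (by rw [← h])
  · exact Or.inl (Or.inr ⟨by simp, Or.inl h⟩)

end Order

section Algebra

variable {K : Type u} [Field K] {B : Type v} {N : ℕ} {C : Type w}
  [AddCommGroup C] [Module K C]
  (F : FreeAssocConformal K B N C) (bas : Module.Basis (NormalWord B N) K C)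
  (r : B → B → Prop)

/-- The submodule of elements all of whose monomials are `≤ W`. -/
def BDsub (W : NormalWord B N) : Submodule K C where
  carrier := {x | ∀ w', bas.repr x w' ≠ 0 → wtLE r w' W}
  zero_mem' := by intro w' hw'; simp at hw'
  add_mem' := by
    intro x y hx hy w' hw'
    rw [map_add, Finsupp.add_apply] at hw'
    by_cases h1 : bas.repr x w' = 0
    · exact hy w' (by intro h2; rw [h1, h2, add_zero] at hw'; exact hw' rfl)
    · exact hx w' h1
  smul_mem' := by
    intro a x hx w' hw'
    rw [map_smul, Finsupp.smul_apply] at hw'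
    exact hx w' (by intro h; rw [h, smul_zero] at hw'; exact hw' rfl)

theorem mem_BDsub {W : NormalWord B N} {x : C} :
    x ∈ BDsub bas r W ↔ ∀ w', bas.repr x w' ≠ 0 → wtLE r w' W := Iff.rfl

theorem bas_mem_BDsub {W w₀ : NormalWord B N} (h : wtLE r w₀ W) :
    bas w₀ ∈ BDsub bas r W := by
  intro w' hw'
  rw [Module.Basis.repr_self] at hw'
  rcases eq_or_ne w' w₀ with rfl | hne
  · exact h
  · exact absurd (Finsupp.single_eq_of_ne' (Ne.symm hne)) hw'

theorem BDsub_mono [IsTrans B r] {W W' : NormalWord B N} (h : wtLE r W W') :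
    BDsub bas r W ≤ BDsub bas r W' :=
  fun _ hx w' h' => wtLE_trans (hx w' h') h

theorem mapBD {W W' : NormalWord B N} (T : C →ₗ[K] C)
    (hT : ∀ w', wtLE r w' W → T (bas w') ∈ BDsub bas r W')
    {x : C} (hx : x ∈ BDsub bas r W) : T x ∈ BDsub bas r W' := by
  have hxe : T x = ∑ w ∈ (bas.repr x).support, bas.repr x w • T (bas w) := by
    conv_lhs => rw [← bas.linearCombination_repr x]
    rw [Finsupp.linearCombination_apply, Finsupp.sum, map_sum]
    simp only [map_smul]
  rw [hxe]
  exact Submodule.sum_mem _ fun w hw =>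
    Submodule.smul_mem _ _ (hT w (hx w (Finsupp.mem_support_iff.1 hw)))

theorem mulD_mem (y : C) (p : Submodule K C) :
    ∀ (i : ℕ) (x : C), (∀ m, F.alg.mul m x y ∈ p) → ∀ n, F.alg.mul n ((F.alg.D ^ i) x) y ∈ p := by
  intro i
  induction i with
  | zero => intro x hx n; simpa using hx n
  | succ i ih =>
    intro x hx n
    have hD : (F.alg.D ^ (i + 1)) x = (F.alg.D ^ i) (F.alg.D x) := by
      rw [pow_succ]; rfl
    rw [hD]
    refine ih (F.alg.D x) ?_ n
    intro m
    cases m with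
    | zero => rw [F.alg.D_mul_zero]; exact p.zero_mem
    | succ k =>
      rw [F.alg.D_mul _ _ _ (Nat.succ_pos k)]
      exact neg_mem (p.smul_mem _ (by simpa using hx k))

theorem mul_D_right (n : ℕ) (x y : C) :
    F.alg.mul n x (F.alg.D y) =
      F.alg.D (F.alg.mul n x y) - F.alg.mul n (F.alg.D x) y := by
  rw [F.alg.leibniz]; abel

/-- Dong-style inversion: `a_(n)(b_(m)c)` lies in the span of the
`(a_(s)b)_(q)c`, `s ≤ n`. -/
theorem dong (a b c : C) (n : ℕ) :
    ∀ m : ℕ, F.alg.mul n a (F.alg.mul m b c) ∈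
      Submodule.span K {x : C | ∃ s ≤ n, ∃ q, x = F.alg.mul q (F.alg.mul s a b) c} := by
  induction n using Nat.strong_induction_on with
  | _ n ih =>
    intro m
    have h := F.alg.assoc n m a b c
    rw [Finset.sum_range_succ'] at h
    simp only [pow_zero, one_mul, Nat.choose_zero_right, Nat.cast_one, one_smul,
      Nat.sub_zero, Nat.add_zero] at h
    have h2 : F.alg.mul n a (F.alg.mul m b c) =
        F.alg.mul m (F.alg.mul n a b) c -
          ∑ t ∈ Finset.range n,
            ((-1 : K) ^ (t + 1) * (n.choose (t + 1) : K)) •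
              F.alg.mul (n - (t + 1)) a (F.alg.mul (m + (t + 1)) b c) := by
      rw [h, add_sub_cancel_left]
    rw [h2]
    refine Submodule.sub_mem _ (Submodule.subset_span ⟨n, le_rfl, m, rfl⟩)
      (Submodule.sum_mem _ fun t ht => Submodule.smul_mem _ _ ?_)
    have htn : t + 1 ≤ n := Nat.succ_le_of_lt (Finset.mem_range.1 ht)
    have hlt : n - (t + 1) < n := by omega
    refine Submodule.span_mono ?_ (ih _ hlt (m + (t + 1)))
    rintro x ⟨s, hs, q, rfl⟩
    exact ⟨s, le_trans hs (Nat.sub_le _ _), q, rfl⟩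

variable (hbas : ∀ w, bas w = evalWord F w)

include hbas

theorem shortMul (hN : 0 < N) {n : ℕ} (hn : n < N) (b : B)
    (bdy : List (B × Fin N)) (l : B) (e : ℕ) :
    F.alg.mul n (F.ι b) (evalWord F (⟨bdy, l, e⟩ : NormalWord B N)) =
      bas ⟨(b, ⟨n, hn⟩) :: bdy, l, e⟩ := by
  rw [hbas]
  rfl

theorem consF [IsTrans B r] (c : B) (m : Fin N) {W : NormalWord B N} {x : C}
    (hx : x ∈ BDsub bas r W) :
    F.alg.mul (m : ℕ) (F.ι c) x ∈ BDsub bas r ⟨(c, m) :: W.body, W.last, W.exp⟩ := by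
  refine mapBD bas r (F.alg.mul (m : ℕ) (F.ι c)) ?_ hx
  intro w' hw'
  obtain ⟨wb, wl, we⟩ := w'
  have : F.alg.mul (m : ℕ) (F.ι c) (bas ⟨wb, wl, we⟩) =
      bas ⟨(c, m) :: wb, wl, we⟩ := by
    rw [hbas, hbas]
    rfl
  rw [this]
  exact bas_mem_BDsub bas r (wtLE_cons (le_refl m) hw')

theorem D_eval [IsTrans B r] (bdy : List (B × Fin N)) (l : B) (e : ℕ) :
    F.alg.D (evalWord F (⟨bdy, l, e⟩ : NormalWord B N)) ∈
      BDsub bas r ⟨bdy, l, e + 1⟩ := by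
  induction bdy with
  | nil =>
    have : F.alg.D (evalWord F (⟨[], l, e⟩ : NormalWord B N)) =
        bas ⟨[], l, e + 1⟩ := by
      rw [hbas]
      show F.alg.D ((F.alg.D ^ e) (F.ι l)) = (F.alg.D ^ (e + 1)) (F.ι l)
      rw [pow_succ']; rfl
    rw [this]
    exact bas_mem_BDsub bas r wtLE_refl
  | cons hd rest ih =>
    obtain ⟨c, p⟩ := hd
    have hev : evalWord F (⟨(c, p) :: rest, l, e⟩ : NormalWord B N) =
        F.alg.mul (p : ℕ) (F.ι c) (evalWord F (⟨rest, l, e⟩ : NormalWord B N)) := rfl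
    rw [hev, F.alg.leibniz]
    refine Submodule.add_mem _ ?_ ?_
    · rcases Nat.eq_zero_or_pos (p : ℕ) with hp | hp
      · rw [hp, F.alg.D_mul_zero]
        exact Submodule.zero_mem _
      · rw [F.alg.D_mul _ _ _ hp]
        refine neg_mem (Submodule.smul_mem _ _ ?_)
        have hlt : (p : ℕ) - 1 < N := lt_of_le_of_lt (Nat.sub_le _ _) p.2
        have : F.alg.mul ((p : ℕ) - 1) (F.ι c)
            (evalWord F (⟨rest, l, e⟩ : NormalWord B N)) =
            bas ⟨(c, ⟨(p : ℕ) - 1, hlt⟩) :: rest, l, e⟩ := by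
          rw [hbas]; rfl
        rw [this]
        refine bas_mem_BDsub bas r (Or.inl (Or.inr ⟨by simp, Or.inl ?_⟩))
        exact List.Lex.rel (Prod.Lex.right c (by simpa [Fin.lt_def] using Nat.sub_lt hp one_pos))
    · exact consF F bas r hbas c p (ih)

theorem D_transfer [IsTrans B r] {W : NormalWord B N} {x : C}
    (hx : x ∈ BDsub bas r W) :
    F.alg.D x ∈ BDsub bas r ⟨W.body, W.last, W.exp + 1⟩ := by
  refine mapBD bas r F.alg.D ?_ hx
  intro w' hw'
  obtain ⟨wb, wl, we⟩ := w'
  rw [hbas]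
  exact BDsub_mono bas r (wtLE_bump hw') (D_eval F bas r hbas wb wl we)

theorem genMul [IsTrans B r] (hN : 0 < N) :
    ∀ (bdy : List (B × Fin N)) (l : B) (e : ℕ) (b : B) (n : ℕ),
      F.alg.mul n (F.ι b) (evalWord F (⟨bdy, l, e⟩ : NormalWord B N)) ∈
        BDsub bas r ⟨(b, topF hN) :: bdy.map (fun p => (p.1, topF hN)), l, e⟩ := by
  have small : ∀ (bdy : List (B × Fin N)) (l : B) (e : ℕ) (b : B) (n : ℕ), n < N →
      F.alg.mul n (F.ι b) (evalWord F (⟨bdy, l, e⟩ : NormalWord B N)) ∈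
        BDsub bas r ⟨(b, topF hN) :: bdy.map (fun p => (p.1, topF hN)), l, e⟩ := by
    intro bdy l e b n hn
    rw [shortMul F bas hbas hN hn]
    refine bas_mem_BDsub bas r ?_
    have h1 : wtLE r (⟨bdy, l, e⟩ : NormalWord B N)
        ⟨bdy.map (fun p => (p.1, topF hN)), l, e⟩ := wtLE_mapTop hN
    exact wtLE_cons (le_topF hN _) h1
  intro bdy
  induction bdy with
  | nil =>
    intro l e
    induction e with
    | zero =>
      intro b n
      by_cases hn : n < N
      · exact small [] l 0 b n hn
      · have : evalWord F (⟨[], l, 0⟩ : NormalWord B N) = F.ι l := by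
          show (F.alg.D ^ 0) (F.ι l) = F.ι l
          simp
        rw [this, F.loc b l n (le_of_not_gt hn)]
        exact Submodule.zero_mem _
    | succ e ihe =>
      intro b n
      by_cases hn : n < N
      · exact small [] l (e + 1) b n hn
      · have hev : evalWord F (⟨[], l, e + 1⟩ : NormalWord B N) =
            F.alg.D (evalWord F (⟨[], l, e⟩ : NormalWord B N)) := by
          show (F.alg.D ^ (e + 1)) (F.ι l) = F.alg.D ((F.alg.D ^ e) (F.ι l))
          rw [pow_succ']; rfl
        rw [hev, mul_D_right]
        refine Submodule.sub_mem _ ?_ ?_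
        · exact D_transfer F bas r hbas (ihe b n)
        · cases n with
          | zero => rw [F.alg.D_mul_zero]; exact Submodule.zero_mem _
          | succ k =>
            rw [F.alg.D_mul _ _ _ (Nat.succ_pos k)]
            refine neg_mem (Submodule.smul_mem _ _ ?_)
            refine BDsub_mono bas r (wtLE_expLe (Nat.le_succ e)) ?_
            simpa using ihe b k
  | cons hd rest ih =>
    obtain ⟨c, p⟩ := hd
    intro l e b n
    by_cases hn : n < N
    · exact small ((c, p) :: rest) l e b n hn
    · have hev : evalWord F (⟨(c, p) :: rest, l, e⟩ : NormalWord B N) =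
          F.alg.mul (p : ℕ) (F.ι c) (evalWord F (⟨rest, l, e⟩ : NormalWord B N)) := rfl
      rw [hev]
      set X := evalWord F (⟨rest, l, e⟩ : NormalWord B N) with hX
      refine Submodule.span_le.2 ?_ (dong F (F.ι b) (F.ι c) X n (p : ℕ))
      rintro x ⟨s, hs, q, rfl⟩
      by_cases hsN : s < N
      · have hassoc := F.alg.assoc s q (F.ι b) (F.ι c) X
        rw [hassoc]
        refine Submodule.sum_mem _ fun t ht => Submodule.smul_mem _ _ ?_
        have hst : s - t < N := lt_of_le_of_lt (Nat.sub_le _ _) hsN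
        have hinner := ih l e c (q + t)
        have houter := consF F bas r hbas b ⟨s - t, hst⟩ hinner
        refine BDsub_mono bas r ?_ houter
        refine wtLE_cons (m := (⟨s - t, hst⟩ : Fin N)) (le_topF hN _) wtLE_refl
      · rw [F.loc b c s (le_of_not_gt hsN)]
        simp only [map_zero, LinearMap.zero_apply]
        exact Submodule.zero_mem _

theorem mainBound [IsTrans B r] (hN : 0 < N) :
    ∀ (ub : List (B × Fin N)) (ul : B) (ue : ℕ) (v : NormalWord B N) (n : ℕ),
      F.alg.mul n (evalWord F (⟨ub, ul, ue⟩ : NormalWord B N)) (evalWord F v) ∈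
        BDsub bas r (NormalWord.natMul ⟨ub, ul, ue⟩ v hN) := by
  intro ub
  induction ub with
  | nil =>
    intro ul ue v n
    obtain ⟨vb, vl, ve⟩ := v
    have hev : evalWord F (⟨[], ul, ue⟩ : NormalWord B N) =
        (F.alg.D ^ ue) (F.ι ul) := rfl
    rw [hev]
    refine mulD_mem F _ _ ue (F.ι ul) ?_ n
    intro m
    exact genMul F bas r hbas hN vb vl ve ul m
  | cons hd ub ih =>
    obtain ⟨a, q⟩ := hd
    intro ul ue v n
    have hev : evalWord F (⟨(a, q) :: ub, ul, ue⟩ : NormalWord B N) =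
        F.alg.mul (q : ℕ) (F.ι a) (evalWord F (⟨ub, ul, ue⟩ : NormalWord B N)) := rfl
    rw [hev]
    set X := evalWord F (⟨ub, ul, ue⟩ : NormalWord B N) with hX
    rw [F.alg.assoc (q : ℕ) n (F.ι a) X (evalWord F v)]
    refine Submodule.sum_mem _ fun t ht => Submodule.smul_mem _ _ ?_
    have hqt : (q : ℕ) - t < N := lt_of_le_of_lt (Nat.sub_le _ _) q.2
    have hinner := ih ul ue v (n + t)
    have houter := consF F bas r hbas a ⟨(q : ℕ) - t, hqt⟩ hinner
    refine BDsub_mono bas r ?_ houter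
    exact wtLE_cons (m := (⟨(q : ℕ) - t, hqt⟩ : Fin N))
      (by rw [Fin.le_def]; exact Nat.sub_le _ _) wtLE_refl

end Algebra

end GSAux

theorem lead_mul_le_natMul {K : Type u} [Field K] [CharZero K]
    {B : Type v} {N : ℕ} {C : Type w} [AddCommGroup C] [Module K C]
    (F : FreeAssocConformal K B N C) (bas : Module.Basis (NormalWord B N) K C)
    (hbas : ∀ w, bas w = evalWord F w)
    (r : B → B → Prop) (hr : IsWellOrder B r) (hN : 0 < N)
    (u v : NormalWord B N) (n : ℕ) (w : NormalWord B N)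
    (hw : IsLead bas r (F.alg.mul n (evalWord F u) (evalWord F v)) w) :
    wtLE r w (u.natMul v hN) := by
  haveI : IsTrans B r := by haveI := hr; infer_instance
  obtain ⟨ub, ul, ue⟩ := u
  have h := GSAux.mainBound F bas r hbas hN ub ul ue v n
  exact (GSAux.mem_BDsub bas r).1 h w hw.1
end
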